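/- arXiv:0804.0316 — 4 statements merged into one kernel-verified Lean document; each statement's English description precedes it below -/
import Mathlib

section
/- Let F1 and F2 be finite subsets of ℤ² such that F1 is uniquely determined by its row and column sums, |F1| = |F2|, and the error in the line sums equals 2α for a positive integer α. Then the symmetric difference F1 △ F2 can be partitioned into α pairwise disjoint staircases. -/
/-- Number of elements of `F` in row `i` (points with first coordinate `i`). -/
def rowSum (F : Finset (ℤ × ℤ)) (i : ℤ) : ℕ := (F.filter (fun p => p.1 = i)).card

/-- Number of elements of `F` in column `j` (points with second coordinate `j`). -/
def colSum (F : Finset (ℤ × ℤ)) (j : ℤ) : ℕ := (F.filter (fun p => p.2 = j)).card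

/-- The total error in the line sums of `F` and `G`:
`∑ i |r_i(F) − r_i(G)| + ∑ j |c_j(F) − c_j(G)|`. -/
noncomputable def lineError (F G : Finset (ℤ × ℤ)) : ℤ :=
  (∑ᶠ i : ℤ, |(rowSum F i : ℤ) - (rowSum G i : ℤ)|) +
  (∑ᶠ j : ℤ, |(colSum F j : ℤ) - (colSum G j : ℤ)|)

/-- `F` is uniquely determined by its row and column sums. -/
def UniquelyDetermined (F : Finset (ℤ × ℤ)) : Prop :=
  ∀ G : Finset (ℤ × ℤ),
    (∀ i, rowSum G i = rowSum F i) → (∀ j, colSum G j = colSum F j) → G = F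

/-- `T` is the set of points of a staircase with respect to `F1` and `F2`:
a finite sequence of distinct points `p 1, …, p n` such that consecutive points
alternate between `F1 \ F2` and `F2 \ F1`, and consecutive points alternately share
a column and a row (in one of the two possible phases). -/
def IsStaircaseSet (F1 F2 T : Finset (ℤ × ℤ)) : Prop :=
  ∃ (n : ℕ) (p : ℕ → ℤ × ℤ),
    1 ≤ n ∧
    -- the points are pairwise distinct
    (∀ i j, 1 ≤ i → i ≤ n → 1 ≤ j → j ≤ n → p i = p j → i = j) ∧
    -- `T` is the set of points of the staircase
    T = (Finset.Icc 1 n).image p ∧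
    -- every point lies in the symmetric difference
    (∀ i, 1 ≤ i → i ≤ n → p i ∈ (F1 \ F2) ∪ (F2 \ F1)) ∧
    -- of each two consecutive points, one is in `F1 \ F2` and the other in `F2 \ F1`
    (∀ i, 1 ≤ i → i + 1 ≤ n →
      ((p i ∈ F1 \ F2 ∧ p (i + 1) ∈ F2 \ F1) ∨
       (p i ∈ F2 \ F1 ∧ p (i + 1) ∈ F1 \ F2))) ∧
    -- alternation of shared columns and rows
    (((∀ i, 1 ≤ i → 2 * i + 1 ≤ n → (p (2 * i)).2 = (p (2 * i + 1)).2) ∧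
      (∀ i, 2 * i + 2 ≤ n → (p (2 * i + 1)).1 = (p (2 * i + 2)).1)) ∨
     ((∀ i, 1 ≤ i → 2 * i + 1 ≤ n → (p (2 * i)).1 = (p (2 * i + 1)).1) ∧
      (∀ i, 2 * i + 2 ≤ n → (p (2 * i + 1)).2 = (p (2 * i + 2)).2)))


/- ===== auxiliary development ===== -/


abbrev P2 := ℤ × ℤ

def idx (L : List P2) (x : P2) : ℕ := List.idxOf x L

lemma idx_lt_length {L : List P2} {x : P2} (hx : x ∈ L) : idx L x < L.length :=
  List.idxOf_lt_length_iff.2 hx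

lemma getD_idx {L : List P2} {x : P2} (hx : x ∈ L) (d : P2) : L.getD (idx L x) d = x := by
  rw [List.getD_eq_getElem L d (idx_lt_length hx)]
  exact List.getElem_idxOf (idx_lt_length hx)

lemma idx_getElem {L : List P2} (h : L.Nodup) {k : ℕ} (hk : k < L.length) :
    idx L (L[k]) = k := List.Nodup.idxOf_getElem h k hk

noncomputable def lineList (A : Finset P2) (key : P2 → ℤ) (i : ℤ) : List P2 :=
  (A.filter (fun y => key y = i)).toList

lemma mem_lineList {A : Finset P2} {key : P2 → ℤ} {i : ℤ} {y : P2} :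
    y ∈ lineList A key i ↔ y ∈ A ∧ key y = i := by
  simp [lineList]

lemma lineList_nodup (A : Finset P2) (key : P2 → ℤ) (i : ℤ) : (lineList A key i).Nodup :=
  Finset.nodup_toList _

lemma lineList_length (A : Finset P2) (key : P2 → ℤ) (i : ℤ) :
    (lineList A key i).length = (A.filter (fun y => key y = i)).card :=
  Finset.length_toList _

noncomputable def mkPair (A B : Finset P2) (key : P2 → ℤ) (x : P2) : P2 :=
  if x ∈ A then (lineList B key (key x)).getD (idx (lineList A key (key x)) x) x
  else if x ∈ B then (lineList A key (key x)).getD (idx (lineList B key (key x)) x) x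
  else x

lemma mkPair_left_big {A B : Finset P2} (hAB : Disjoint A B) {key : P2 → ℤ} {x : P2}
    (hx : x ∈ A) (h : idx (lineList A key (key x)) x < (lineList B key (key x)).length) :
    mkPair A B key x ∈ B ∧ key (mkPair A B key x) = key x ∧
      mkPair A B key (mkPair A B key x) = x := by
  have hxL : x ∈ lineList A key (key x) := mem_lineList.2 ⟨hx, rfl⟩
  have e1 : mkPair A B key x = (lineList B key (key x))[idx (lineList A key (key x)) x] := by
    rw [mkPair, if_pos hx, List.getD_eq_getElem _ _ h]
  set y := mkPair A B key x with hy
  have hyL : y ∈ lineList B key (key x) := by rw [e1]; exact List.getElem_mem _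
  obtain ⟨hyB, hykey⟩ := mem_lineList.1 hyL
  have hyA : y ∉ A := fun hyA => (Finset.disjoint_left.1 hAB hyA hyB).elim
  refine ⟨hyB, hykey, ?_⟩
  have e2 : idx (lineList B key (key x)) y = idx (lineList A key (key x)) x := by
    rw [e1]; exact idx_getElem (lineList_nodup _ _ _) h
  rw [mkPair, if_neg hyA, if_pos hyB, hykey, e2]
  exact getD_idx hxL y

lemma mkPair_left_fix {A B : Finset P2} {key : P2 → ℤ} {x : P2}
    (hx : x ∈ A) (h : (lineList B key (key x)).length ≤ idx (lineList A key (key x)) x) :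
    mkPair A B key x = x := by
  rw [mkPair, if_pos hx, List.getD_eq_default _ _ h]

lemma mkPair_left_fix_iff {A B : Finset P2} (hAB : Disjoint A B) {key : P2 → ℤ} {x : P2}
    (hx : x ∈ A) :
    mkPair A B key x = x ↔ (lineList B key (key x)).length ≤ idx (lineList A key (key x)) x := by
  constructor
  · intro hfix
    by_contra hlt
    push_neg at hlt
    have := (mkPair_left_big hAB hx hlt).1
    rw [hfix] at this
    exact Finset.disjoint_left.1 hAB hx this
  · exact mkPair_left_fix hx

lemma mkPair_comm_apply {A B : Finset P2} (key : P2 → ℤ) (x : P2) (hxA : x ∉ A) :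
    mkPair A B key x = mkPair B A key x := by
  by_cases hxB : x ∈ B
  · rw [mkPair, mkPair, if_neg hxA, if_pos hxB, if_pos hxB]
  · rw [mkPair, mkPair, if_neg hxA, if_neg hxB, if_neg hxB, if_neg hxA]

lemma mkPair_spec {A B : Finset P2} (hAB : Disjoint A B) (key : P2 → ℤ) (x : P2) :
    mkPair A B key x = x ∨
    (mkPair A B key x ∈ A ∪ B ∧ key (mkPair A B key x) = key x ∧
      mkPair A B key (mkPair A B key x) = x ∧ (x ∈ A ↔ mkPair A B key x ∈ B)) := by
  by_cases hxA : x ∈ A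
  · rcases lt_or_ge (idx (lineList A key (key x)) x) (lineList B key (key x)).length with h | h
    · obtain ⟨h1, h2, h3⟩ := mkPair_left_big hAB hxA h
      exact Or.inr ⟨Finset.mem_union_right _ h1, h2, h3, iff_of_true hxA h1⟩
    · exact Or.inl (mkPair_left_fix hxA h)
  · by_cases hxB : x ∈ B
    · rcases lt_or_ge (idx (lineList B key (key x)) x) (lineList A key (key x)).length with h | h
      · obtain ⟨h1, h2, h3⟩ := mkPair_left_big hAB.symm hxB h
        have hya : mkPair B A key x ∉ B := fun hh => Finset.disjoint_left.1 hAB h1 hh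
        rw [mkPair_comm_apply key x hxA]
        refine Or.inr ⟨Finset.mem_union_left _ h1, h2, ?_, iff_of_false hxA hya⟩
        rw [← mkPair_comm_apply (A := B) (B := A) key _ hya, h3]
      · exact Or.inl ((mkPair_comm_apply key x hxA).trans (mkPair_left_fix hxB h))
    · left; rw [mkPair, if_neg hxA, if_neg hxB]

lemma count_moved {A B : Finset P2} (hAB : Disjoint A B) (key : P2 → ℤ) (i : ℤ) :
    ((A.filter (fun y => key y = i)).filter (fun x => mkPair A B key x ≠ x)).card
      = min ((A.filter (fun y => key y = i)).card) ((B.filter (fun y => key y = i)).card) := by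
  set LA := lineList A key i with hLA
  set a := (A.filter (fun y => key y = i)).card
  set b := (B.filter (fun y => key y = i)).card
  have hlen : LA.length = a := lineList_length A key i
  have key_mem : ∀ x ∈ (A.filter (fun y => key y = i)).filter
      (fun x => mkPair A B key x ≠ x), x ∈ A ∧ key x = i := by
    intro x hx
    obtain ⟨hx1, -⟩ := Finset.mem_filter.1 hx
    exact ⟨(Finset.mem_filter.1 hx1).1, (Finset.mem_filter.1 hx1).2⟩
  rw [← Finset.card_range (min a b)]
  apply Finset.card_nbij' (fun x => idx LA x) (fun j => LA.getD j (0, 0))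
  · intro x hx
    obtain ⟨hxA, hxkey⟩ := key_mem x hx
    have hmoved := (Finset.mem_filter.1 hx).2
    have hxL : x ∈ LA := mem_lineList.2 ⟨hxA, hxkey⟩
    have h1 : idx LA x < a := hlen ▸ idx_lt_length hxL
    have h2 : idx LA x < b := by
      by_contra h
      push_neg at h
      apply hmoved
      apply mkPair_left_fix hxA
      rw [hxkey]
      rw [← hLA]  -- lineList A key (key x) with key x = i
      calc (lineList B key i).length = b := lineList_length B key i
        _ ≤ idx LA x := h
    simp only [Finset.mem_coe, Finset.mem_range]
    omega
  · intro j hj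
    simp only [Finset.mem_coe, Finset.mem_range] at hj
    have hja : j < LA.length := by omega
    have hget : LA.getD j (0,0) = LA[j] := List.getD_eq_getElem _ _ hja
    have hmem : LA[j] ∈ LA := List.getElem_mem _
    obtain ⟨hA, hkey⟩ := mem_lineList.1 hmem
    beta_reduce
    rw [hget]
    refine Finset.mem_filter.2 ⟨Finset.mem_filter.2 ⟨hA, hkey⟩, ?_⟩
    have hiff := mkPair_left_fix_iff (key := key) hAB hA
    rw [hkey, ← hLA, idx_getElem (lineList_nodup A key i) hja] at hiff
    intro hfix
    have hble := hiff.1 hfix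
    rw [lineList_length B key i] at hble
    omega
  · intro x hx
    obtain ⟨hxA, hxkey⟩ := key_mem x hx
    exact getD_idx (mem_lineList.2 ⟨hxA, hxkey⟩) _
  · intro j hj
    simp only [Finset.mem_coe, Finset.mem_range] at hj
    have hja : j < LA.length := by omega
    beta_reduce
    rw [List.getD_eq_getElem _ _ hja]
    exact idx_getElem (lineList_nodup A key i) hja

lemma count_fixed_line {A B : Finset P2} (hAB : Disjoint A B) (key : P2 → ℤ) (i : ℤ) :
    (((((A ∪ B).filter (fun y => key y = i)).filter
        (fun x => mkPair A B key x = x)).card : ℤ))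
      = |((A.filter (fun y => key y = i)).card : ℤ)
          - ((B.filter (fun y => key y = i)).card : ℤ)| := by
  classical
  set a := (A.filter (fun y => key y = i)).card with ha
  set b := (B.filter (fun y => key y = i)).card with hb
  have hsplit : (A ∪ B).filter (fun y => key y = i)
      = A.filter (fun y => key y = i) ∪ B.filter (fun y => key y = i) :=
    Finset.filter_union _ _ _
  have hdisj : Disjoint (A.filter (fun y => key y = i)) (B.filter (fun y => key y = i)) :=
    Finset.disjoint_filter_filter hAB
  have hsplit2 : ((A ∪ B).filter (fun y => key y = i)).filter (fun x => mkPair A B key x = x)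
      = (A.filter (fun y => key y = i)).filter (fun x => mkPair A B key x = x)
        ∪ (B.filter (fun y => key y = i)).filter (fun x => mkPair A B key x = x) := by
    rw [hsplit, Finset.filter_union]
  have hcardsplit : (((A ∪ B).filter (fun y => key y = i)).filter
      (fun x => mkPair A B key x = x)).card
      = ((A.filter (fun y => key y = i)).filter (fun x => mkPair A B key x = x)).card
        + ((B.filter (fun y => key y = i)).filter (fun x => mkPair A B key x = x)).card := by
    rw [hsplit2]
    exact Finset.card_union_of_disjoint (Finset.disjoint_filter_filter hdisj)
  have hA : ((A.filter (fun y => key y = i)).filter (fun x => mkPair A B key x = x)).card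
      = a - min a b := by
    have h1 := Finset.card_filter_add_card_filter_not
      (s := A.filter (fun y => key y = i)) (p := fun x => mkPair A B key x = x)
    have h2 := count_moved hAB key i
    have h3 : (Finset.filter (fun x => ¬ mkPair A B key x = x)
        (A.filter (fun y => key y = i))).card = min a b := h2
    omega
  have hB : ((B.filter (fun y => key y = i)).filter (fun x => mkPair A B key x = x)).card
      = b - min b a := by
    have hcong : (B.filter (fun y => key y = i)).filter (fun x => mkPair A B key x = x)
        = (B.filter (fun y => key y = i)).filter (fun x => mkPair B A key x = x) := by
      apply Finset.filter_congr
      intro x hx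
      have hxB : x ∈ B := (Finset.mem_filter.1 hx).1
      have hxA : x ∉ A := fun h => Finset.disjoint_left.1 hAB h hxB
      rw [mkPair_comm_apply key x hxA]
    rw [hcong]
    have h1 := Finset.card_filter_add_card_filter_not
      (s := B.filter (fun y => key y = i)) (p := fun x => mkPair B A key x = x)
    have h2 := count_moved hAB.symm key i
    have h3 : (Finset.filter (fun x => ¬ mkPair B A key x = x)
        (B.filter (fun y => key y = i))).card = min b a := h2
    omega
  rw [hcardsplit, hA, hB]
  rcases le_total a b with h | h
  · rw [abs_of_nonpos (by push_cast; omega)]; push_cast; omega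
  · rw [abs_of_nonneg (by push_cast; omega)]; push_cast; omega

def Pairing (S F1 F2 : Finset P2) (key : P2 → ℤ) (ρ : P2 → P2) : Prop :=
  ∀ x ∈ S, ρ x ≠ x →
    ρ x ∈ S ∧ ρ (ρ x) = x ∧ key (ρ x) = key x ∧ (x ∈ F1 \ F2 ↔ ρ x ∈ F2 \ F1)

def stepFun (ρ γ : P2 → P2) (k : ℕ) : P2 → P2 := if k % 2 = 0 then γ else ρ

def stepKey (key1 key2 : P2 → ℤ) (k : ℕ) : P2 → ℤ := if k % 2 = 0 then key2 else key1

lemma stepFun_even {ρ γ : P2 → P2} {k : ℕ} (h : k % 2 = 0) : stepFun ρ γ k = γ := if_pos h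

lemma stepFun_odd {ρ γ : P2 → P2} {k : ℕ} (h : k % 2 = 1) : stepFun ρ γ k = ρ :=
  if_neg (by omega)

lemma stepFun_congr {ρ γ : P2 → P2} {k l : ℕ} (h : k % 2 = l % 2) :
    stepFun ρ γ k = stepFun ρ γ l := by unfold stepFun; rw [h]

def pathSeq (ρ γ : P2 → P2) (x0 : P2) : ℕ → P2
  | 0 => x0
  | (k+1) => stepFun ρ γ k (pathSeq ρ γ x0 k)

section Path

variable {S F1 F2 : Finset P2} {key1 key2 : P2 → ℤ} {ρ γ : P2 → P2} {x0 : P2}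

lemma stepPairing (hρ : Pairing S F1 F2 key1 ρ) (hγ : Pairing S F1 F2 key2 γ) (k : ℕ) :
    Pairing S F1 F2 (stepKey key1 key2 k) (stepFun ρ γ k) := by
  unfold stepFun stepKey
  by_cases h : k % 2 = 0
  · rw [if_pos h, if_pos h]; exact hγ
  · rw [if_neg h, if_neg h]; exact hρ

lemma pathSeq_mem (hρ : Pairing S F1 F2 key1 ρ) (hγ : Pairing S F1 F2 key2 γ)
    (hx0S : x0 ∈ S) : ∀ k, pathSeq ρ γ x0 k ∈ S := by
  intro k
  induction k with
  | zero => exact hx0S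
  | succ k ih =>
    show stepFun ρ γ k (pathSeq ρ γ x0 k) ∈ S
    by_cases h : stepFun ρ γ k (pathSeq ρ γ x0 k) = pathSeq ρ γ x0 k
    · rw [h]; exact ih
    · exact (stepPairing hρ hγ k _ ih h).1

lemma pathSeq_back (hρ : Pairing S F1 F2 key1 ρ) (hγ : Pairing S F1 F2 key2 γ)
    (hx0S : x0 ∈ S) (k : ℕ) (hne : pathSeq ρ γ x0 (k+1) ≠ pathSeq ρ γ x0 k) :
    stepFun ρ γ k (pathSeq ρ γ x0 (k+1)) = pathSeq ρ γ x0 k := by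
  have h1 : pathSeq ρ γ x0 (k+1) = stepFun ρ γ k (pathSeq ρ γ x0 k) := rfl
  have h2 := (stepPairing hρ hγ k (pathSeq ρ γ x0 k) (pathSeq_mem hρ hγ hx0S k)
    (by rw [← h1]; exact hne)).2.1
  rw [h1]
  exact h2.trans rfl |>.symm ▸ h2

lemma pathSeq_inj (hρ : Pairing S F1 F2 key1 ρ) (hγ : Pairing S F1 F2 key2 γ)
    (hx0S : x0 ∈ S) (hx0 : ρ x0 = x0) :
    ∀ b, (∀ k, k < b → pathSeq ρ γ x0 (k+1) ≠ pathSeq ρ γ x0 k) →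
      ∀ a, a < b → pathSeq ρ γ x0 a ≠ pathSeq ρ γ x0 b := by
  set q := pathSeq ρ γ x0 with hqdef
  intro b
  induction b using Nat.strong_induction_on with
  | _ b IH =>
  intro hmove a hab heq
  have hback : ∀ k, k < b → stepFun ρ γ k (q (k+1)) = q k :=
    fun k hk => pathSeq_back hρ hγ hx0S k (hmove k hk)
  have hb1 : 1 ≤ b := by omega
  have hstep : ∀ k, q (k+1) = stepFun ρ γ k (q k) := fun k => rfl
  rcases Nat.eq_zero_or_pos a with rfl | ha1
  · -- a = 0
    rcases Nat.mod_two_eq_zero_or_one (b-1) with hpar | hpar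
    · -- step b-1 is γ, b odd
      have hg : stepFun ρ γ (b-1) = γ := stepFun_even hpar
      have hbk := hback (b-1) (by omega)
      rw [show b - 1 + 1 = b by omega] at hbk
      have hq1 : q 1 = γ (q 0) := by rw [hstep 0, stepFun_even rfl]
      have hqb1 : q (b-1) = q 1 := by
        rw [← hbk, hg, ← heq, ← hq1]
      have hbne1 : b ≠ 1 := by
        intro h; subst h; exact hmove 0 (by omega) heq.symm
      have hbne2 : b ≠ 2 := by omega
      have hblt : 1 < b - 1 := by omega
      exact IH (b-1) (by omega) (fun k hk => hmove k (by omega)) 1 hblt hqb1.symm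
    · -- step b-1 is ρ, b even
      have hg : stepFun ρ γ (b-1) = ρ := stepFun_odd hpar
      have hbk := hback (b-1) (by omega)
      rw [show b - 1 + 1 = b by omega, hg] at hbk
      have hfix : ρ (q 0) = q 0 := hx0
      have h1 : q (b-1) = q b := by rw [← hbk, ← heq]; exact hfix
      exact hmove (b-1) (by omega) (by rw [show b - 1 + 1 = b by omega]; exact h1.symm)
  · -- a ≥ 1
    have hbnea1 : b ≠ a + 1 := by
      intro h; subst h; exact hmove a (by omega) heq.symm
    by_cases hpar : (a-1) % 2 = (b-1) % 2
    · -- same parity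
      have hg : stepFun ρ γ (a-1) = stepFun ρ γ (b-1) := stepFun_congr hpar
      have hbkA := hback (a-1) (by omega)
      have hbkB := hback (b-1) (by omega)
      rw [show a - 1 + 1 = a by omega] at hbkA
      rw [show b - 1 + 1 = b by omega] at hbkB
      have : q (a-1) = q (b-1) := by rw [← hbkA, hg, heq, hbkB]
      have hne : a - 1 < b - 1 := by
        rcases Nat.lt_or_ge (a-1) (b-1) with h | h
        · exact h
        · exfalso
          have : a - 1 = b - 1 := by omega
          omega
      exact IH (b-1) (by omega) (fun k hk => hmove k (by omega)) (a-1) hne this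
    · -- different parity
      have hb3 : a + 3 ≤ b := by omega
      have hg : stepFun ρ γ a = stepFun ρ γ (b-1) := stepFun_congr (by omega)
      have hbkB := hback (b-1) (by omega)
      rw [show b - 1 + 1 = b by omega] at hbkB
      have h1 : q (a+1) = q (b-1) := by
        rw [hstep a, hg, heq, hbkB]
      exact IH (b-1) (by omega) (fun k hk => hmove k (by omega)) (a+1) (by omega) h1

lemma extract_path (hS : ∀ x ∈ S, x ∈ (F1 \ F2) ∪ (F2 \ F1))
    (hρ : Pairing S F1 F2 key1 ρ) (hγ : Pairing S F1 F2 key2 γ)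
    (hx0S : x0 ∈ S) (hx0 : ρ x0 = x0) :
    ∃ T : Finset P2, T ⊆ S ∧ T.Nonempty ∧
      (∀ x ∈ T, ρ x ∈ T ∧ γ x ∈ T) ∧
      (T.filter (fun x => ρ x = x)).card + (T.filter (fun x => γ x = x)).card = 2 ∧
      ∃ (n : ℕ) (p : ℕ → P2),
        1 ≤ n ∧
        (∀ i j, 1 ≤ i → i ≤ n → 1 ≤ j → j ≤ n → p i = p j → i = j) ∧
        T = (Finset.Icc 1 n).image p ∧
        (∀ i, 1 ≤ i → i ≤ n → p i ∈ (F1 \ F2) ∪ (F2 \ F1)) ∧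
        (∀ i, 1 ≤ i → i + 1 ≤ n →
          ((p i ∈ F1 \ F2 ∧ p (i + 1) ∈ F2 \ F1) ∨
           (p i ∈ F2 \ F1 ∧ p (i + 1) ∈ F1 \ F2))) ∧
        (∀ i, 1 ≤ i → 2 * i + 1 ≤ n → key1 (p (2 * i)) = key1 (p (2 * i + 1))) ∧
        (∀ i, 2 * i + 2 ≤ n → key2 (p (2 * i + 1)) = key2 (p (2 * i + 2))) := by
  classical
  set q := pathSeq ρ γ x0 with hqdef
  have hstep : ∀ k, q (k+1) = stepFun ρ γ k (q k) := fun k => rfl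
  have hq0 : q 0 = x0 := rfl
  have hmemS : ∀ k, q k ∈ S := pathSeq_mem hρ hγ hx0S
  -- termination
  have hstop : ∃ k, q (k+1) = q k := by
    by_contra h
    push_neg at h
    obtain ⟨a, -, b, -, hne, heq⟩ :=
      Finset.exists_ne_map_eq_of_card_lt_of_maps_to
        (s := Finset.range (S.card + 1)) (t := S)
        (by simp) (fun k _ => hmemS k)
    rcases Nat.lt_or_ge a b with hab | hab
    · exact pathSeq_inj hρ hγ hx0S hx0 b (fun k _ => h k) a hab heq
    · exact pathSeq_inj hρ hγ hx0S hx0 a (fun k _ => h k) b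
        (by omega) heq.symm
  set m := Nat.find hstop with hmdef
  have hm : q (m+1) = q m := Nat.find_spec hstop
  have hmin : ∀ k, k < m → q (k+1) ≠ q k := fun k hk => Nat.find_min hstop hk
  have hinj : ∀ a b, a ≤ m → b ≤ m → q a = q b → a = b := by
    intro a b ha hb heq
    by_contra hne
    rcases Nat.lt_or_ge a b with h | h
    · exact pathSeq_inj hρ hγ hx0S hx0 b (fun k hk => hmin k (by omega)) a h heq
    · exact pathSeq_inj hρ hγ hx0S hx0 a (fun k hk => hmin k (by omega)) b
        (by omega) heq.symm
  have hback : ∀ k, k < m → stepFun ρ γ k (q (k+1)) = q k :=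
    fun k hk => pathSeq_back hρ hγ hx0S k (hmin k hk)
  refine ⟨(Finset.Icc 1 (m+1)).image (fun i => q (i-1)), ?_, ?_, ?_, ?_, ?_⟩
  -- characterization of membership
  case _ => -- T ⊆ S
    intro x hx
    obtain ⟨i, -, rfl⟩ := Finset.mem_image.1 hx
    exact hmemS _
  case _ => exact ⟨x0, Finset.mem_image.2 ⟨1, by simp, hq0⟩⟩
  case _ => -- closure
    have hmemT : ∀ k, k ≤ m → q k ∈ (Finset.Icc 1 (m+1)).image (fun i => q (i-1)) := by
      intro k hk
      exact Finset.mem_image.2 ⟨k+1, by simp [Finset.mem_Icc]; omega, by simp⟩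
    intro x hx
    obtain ⟨i, hi, rfl⟩ := Finset.mem_image.1 hx
    rw [Finset.mem_Icc] at hi
    obtain ⟨k, hk, hkeq⟩ : ∃ k, k ≤ m ∧ i - 1 = k := ⟨i - 1, by omega, rfl⟩
    rw [hkeq]
    constructor
    · -- ρ (q k) ∈ T
      rcases Nat.mod_two_eq_zero_or_one k with hpar | hpar
      · -- step k is γ; ρ comes from step k-1 or fixed at 0
        rcases Nat.eq_zero_or_pos k with rfl | hk1
        · rw [hq0, hx0]; exact hmemT 0 (by omega)
        · have hg : stepFun ρ γ (k-1) = ρ := stepFun_odd (by omega)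
          have hbk := hback (k-1) (by omega)
          rw [show k - 1 + 1 = k by omega, hg] at hbk
          rw [hbk]; exact hmemT (k-1) (by omega)
      · -- step k is ρ
        have hg : stepFun ρ γ k = ρ := stepFun_odd hpar
        rcases Nat.lt_or_ge k m with hkm | hkm
        · rw [← hg, ← hstep k]; exact hmemT (k+1) (by omega)
        · have hkm' : k = m := by omega
          rw [hkm'] at hg ⊢
          have : ρ (q m) = q m := by rw [← hg, ← hstep m]; exact hm
          rw [this]; exact hmemT m le_rfl
    · -- γ (q k) ∈ T
      rcases Nat.mod_two_eq_zero_or_one k with hpar | hpar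
      · have hg : stepFun ρ γ k = γ := stepFun_even hpar
        rcases Nat.lt_or_ge k m with hkm | hkm
        · rw [← hg, ← hstep k]; exact hmemT (k+1) (by omega)
        · have hkm' : k = m := by omega
          rw [hkm'] at hg ⊢
          have : γ (q m) = q m := by rw [← hg, ← hstep m]; exact hm
          rw [this]; exact hmemT m le_rfl
      · have hk1 : 1 ≤ k := by omega
        have hg : stepFun ρ γ (k-1) = γ := stepFun_even (by omega)
        have hbk := hback (k-1) (by omega)
        rw [show k - 1 + 1 = k by omega, hg] at hbk
        rw [hbk]; exact hmemT (k-1) (by omega)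
  case _ => -- fixed point count
    have hmemT : ∀ k, k ≤ m → q k ∈ (Finset.Icc 1 (m+1)).image (fun i => q (i-1)) := by
      intro k hk
      exact Finset.mem_image.2 ⟨k+1, by simp [Finset.mem_Icc]; omega, by simp⟩
    have hmemT' : ∀ x, x ∈ (Finset.Icc 1 (m+1)).image (fun i => q (i-1)) →
        ∃ k, k ≤ m ∧ q k = x := by
      intro x hx
      obtain ⟨i, hi, rfl⟩ := Finset.mem_image.1 hx
      rw [Finset.mem_Icc] at hi
      exact ⟨i - 1, by omega, rfl⟩
    have hfixρ : ∀ k, k ≤ m → (ρ (q k) = q k ↔ (k = 0 ∨ (k = m ∧ m % 2 = 1))) := by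
      intro k hk
      constructor
      · intro hfix
        by_contra hcon
        push_neg at hcon
        obtain ⟨hk0, hkm⟩ := hcon
        rcases Nat.mod_two_eq_zero_or_one k with hpar | hpar
        · have hbk := hback (k-1) (by omega)
          have hg : stepFun ρ γ (k-1) = ρ := stepFun_odd (by omega)
          rw [show k - 1 + 1 = k by omega, hg] at hbk
          exact hmin (k-1) (by omega)
            (by rw [show k - 1 + 1 = k by omega, ← hbk, hfix])
        · rcases Nat.lt_or_ge k m with hkm2 | hkm2
          · exact hmin k hkm2 (by rw [hstep k, stepFun_odd hpar, hfix])
          · have : k = m := by omega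
            exact absurd hpar (by rw [this]; omega)
      · rintro (hk0 | ⟨hkm, hodd⟩)
        · rw [hk0, hq0, hx0]
        · rw [hkm, ← stepFun_odd (ρ := ρ) (γ := γ) hodd, ← hstep m]
          exact hm
    have hfixγ : ∀ k, k ≤ m → (γ (q k) = q k ↔ (k = m ∧ m % 2 = 0)) := by
      intro k hk
      constructor
      · intro hfix
        by_contra hcon
        push_neg at hcon
        rcases Nat.mod_two_eq_zero_or_one k with hpar | hpar
        · rcases Nat.lt_or_ge k m with hkm2 | hkm2
          · exact hmin k hkm2 (by rw [hstep k, stepFun_even hpar, hfix])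
          · have hkm : k = m := by omega
            exact hcon hkm (by omega)
        · have hbk := hback (k-1) (by omega)
          have hg : stepFun ρ γ (k-1) = γ := stepFun_even (by omega)
          rw [show k - 1 + 1 = k by omega, hg] at hbk
          exact hmin (k-1) (by omega)
            (by rw [show k - 1 + 1 = k by omega, ← hbk, hfix])
      · rintro ⟨hkm, heven⟩
        rw [hkm, ← stepFun_even (ρ := ρ) (γ := γ) heven, ← hstep m]
        exact hm
    rcases Nat.mod_two_eq_zero_or_one m with hpar | hpar
    · have e1 : ((Finset.Icc 1 (m+1)).image (fun i => q (i-1))).filter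
          (fun x => ρ x = x) = {q 0} := by
        ext x
        simp only [Finset.mem_filter, Finset.mem_singleton]
        constructor
        · rintro ⟨hxT, hfix⟩
          obtain ⟨k, hk, rfl⟩ := hmemT' x hxT
          rcases (hfixρ k hk).1 hfix with h0 | ⟨-, hodd⟩
          · rw [h0]
          · omega
        · rintro rfl
          exact ⟨hmemT 0 (by omega), (hfixρ 0 (by omega)).2 (Or.inl rfl)⟩
      have e2 : ((Finset.Icc 1 (m+1)).image (fun i => q (i-1))).filter
          (fun x => γ x = x) = {q m} := by
        ext x
        simp only [Finset.mem_filter, Finset.mem_singleton]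
        constructor
        · rintro ⟨hxT, hfix⟩
          obtain ⟨k, hk, rfl⟩ := hmemT' x hxT
          obtain ⟨hkm, -⟩ := (hfixγ k hk).1 hfix
          rw [hkm]
        · rintro rfl
          exact ⟨hmemT m le_rfl, (hfixγ m le_rfl).2 ⟨rfl, hpar⟩⟩
      rw [e1, e2]
      simp
    · have hm0 : m ≠ 0 := by omega
      have hne : q 0 ≠ q m := fun h => hm0 ((hinj 0 m (by omega) le_rfl h).symm ▸ rfl)
      have e1 : ((Finset.Icc 1 (m+1)).image (fun i => q (i-1))).filter
          (fun x => ρ x = x) = {q 0, q m} := by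
        ext x
        simp only [Finset.mem_filter, Finset.mem_insert, Finset.mem_singleton]
        constructor
        · rintro ⟨hxT, hfix⟩
          obtain ⟨k, hk, rfl⟩ := hmemT' x hxT
          rcases (hfixρ k hk).1 hfix with h0 | ⟨hkm, -⟩
          · left; rw [h0]
          · right; rw [hkm]
        · rintro (rfl | rfl)
          · exact ⟨hmemT 0 (by omega), (hfixρ 0 (by omega)).2 (Or.inl rfl)⟩
          · exact ⟨hmemT m le_rfl, (hfixρ m le_rfl).2 (Or.inr ⟨rfl, hpar⟩)⟩
      have e2 : ((Finset.Icc 1 (m+1)).image (fun i => q (i-1))).filter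
          (fun x => γ x = x) = ∅ := by
        ext x
        simp only [Finset.mem_filter, Finset.notMem_empty, iff_false, not_and]
        intro hxT hfix
        obtain ⟨k, hk, rfl⟩ := hmemT' x hxT
        obtain ⟨-, heven⟩ := (hfixγ k hk).1 hfix
        omega
      rw [e1, e2]
      rw [Finset.card_insert_of_notMem (by simpa using hne), Finset.card_singleton]
      simp
  case _ => -- staircase data
    refine ⟨m+1, fun i => q (i-1), by omega, ?_, rfl, ?_, ?_, ?_, ?_⟩
    · intro i j hi hin hj hjn heq
      have := hinj (i-1) (j-1) (by omega) (by omega) heq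
      omega
    · intro i _ _; exact hS _ (hmemS _)
    · -- alternation
      intro i hi hin
      show (q (i-1) ∈ F1 \ F2 ∧ q (i+1-1) ∈ F2 \ F1) ∨
        (q (i-1) ∈ F2 \ F1 ∧ q (i+1-1) ∈ F1 \ F2)
      have hmove : q ((i-1)+1) ≠ q (i-1) := hmin (i-1) (by omega)
      have hPP := stepPairing hρ hγ (i-1) (q (i-1)) (hmemS (i-1))
        (by rw [← hstep (i-1)]; exact hmove)
      have hiff := hPP.2.2.2
      have hstS : stepFun ρ γ (i-1) (q (i-1)) ∈ S := hPP.1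
      have hrw : q (i+1-1) = stepFun ρ γ (i-1) (q (i-1)) := by
        rw [show i + 1 - 1 = (i-1) + 1 by omega]; exact hstep (i-1)
      rcases Finset.mem_union.1 (hS _ (hmemS (i-1))) with hA | hB
      · left
        exact ⟨hA, by rw [hrw]; exact hiff.1 hA⟩
      · right
        refine ⟨hB, ?_⟩
        have hnA : q (i-1) ∉ F1 \ F2 := by
          rw [Finset.mem_sdiff] at hB ⊢
          tauto
        have hnB : stepFun ρ γ (i-1) (q (i-1)) ∉ F2 \ F1 := fun h => hnA (hiff.2 h)
        rcases Finset.mem_union.1 (hS _ hstS) with h | h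
        · rw [hrw]; exact h
        · exact absurd h hnB
    · -- key1 clause
      intro i hi hn
      show key1 (q (2*i-1)) = key1 (q (2*i+1-1))
      have hmove : q ((2*i-1)+1) ≠ q (2*i-1) := hmin (2*i-1) (by omega)
      have hPP := stepPairing hρ hγ (2*i-1) (q (2*i-1)) (hmemS (2*i-1))
        (by rw [← hstep (2*i-1)]; exact hmove)
      have hkey := hPP.2.2.1
      have hsk : stepKey key1 key2 (2*i-1) = key1 := by
        unfold stepKey; rw [if_neg (by omega)]
      rw [hsk] at hkey
      have e1 : (2*i - 1 : ℕ) = 2*i - 1 := rfl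
      have hrw1 : q (2*i-1) = q (2*i - 1) := rfl
      have : key1 (stepFun ρ γ (2*i-1) (q (2*i-1))) = key1 (q (2*i-1)) := hkey
      rw [← hstep (2*i-1), show 2*i-1+1 = 2*i by omega] at this
      rw [show 2*i+1-1 = 2*i by omega, show 2*i-1 = 2*i-1 from rfl]
      exact this.symm
    · -- key2 clause
      intro i hn
      show key2 (q (2*i+1-1)) = key2 (q (2*i+2-1))
      have hmove : q (2*i+1) ≠ q (2*i) := hmin (2*i) (by omega)
      have hPP := stepPairing hρ hγ (2*i) (q (2*i)) (hmemS (2*i))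
        (by rw [← hstep (2*i)]; exact hmove)
      have hkey := hPP.2.2.1
      have hsk : stepKey key1 key2 (2*i) = key2 := by
        unfold stepKey; rw [if_pos (by omega)]
      rw [hsk] at hkey
      have : key2 (stepFun ρ γ (2*i) (q (2*i))) = key2 (q (2*i)) := hkey
      rw [← hstep (2*i)] at this
      rw [show 2*i+1-1 = 2*i by omega, show 2*i+2-1 = 2*i+1 by omega]
      exact this.symm

end Path

lemma mem_foldr_union {x : P2} :
    ∀ (Ts : List (Finset P2)), x ∈ Ts.foldr (· ∪ ·) ∅ ↔ ∃ T ∈ Ts, x ∈ T := by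
  intro Ts
  induction Ts with
  | nil => simp
  | cons T Ts ih => simp [ih]

lemma partition_into_staircases (F1 F2 : Finset P2) (ρ γ : P2 → P2) :
    ∀ (N : ℕ) (S : Finset P2), S.card ≤ N →
    (∀ x ∈ S, x ∈ (F1 \ F2) ∪ (F2 \ F1)) →
    Pairing S F1 F2 (fun x => x.1) ρ → Pairing S F1 F2 (fun x => x.2) γ →
    (∀ C : Finset P2, C ⊆ S → C.Nonempty →
       (∀ x ∈ C, ρ x ∈ C ∧ γ x ∈ C ∧ ρ x ≠ x ∧ γ x ≠ x) → False) →
    ∃ Ts : List (Finset P2),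
      (∀ T ∈ Ts, IsStaircaseSet F1 F2 T) ∧
      Ts.Pairwise Disjoint ∧
      Ts.foldr (· ∪ ·) ∅ = S ∧
      2 * Ts.length
        = (S.filter (fun x => ρ x = x)).card + (S.filter (fun x => γ x = x)).card := by
  intro N
  induction N with
  | zero =>
    intro S hcard _ _ _ _
    have hSe : S = ∅ := Finset.card_eq_zero.1 (by omega)
    subst hSe
    exact ⟨[], by simp, by simp, by simp, by simp⟩
  | succ n IH =>
    intro S hcard hS hρ hγ hsw
    rcases Finset.eq_empty_or_nonempty S with hSe | hSne
    · subst hSe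
      exact ⟨[], by simp, by simp, by simp, by simp⟩
    have hex : ∃ x0 ∈ S, ρ x0 = x0 ∨ γ x0 = x0 := by
      by_contra h
      push_neg at h
      apply hsw S le_rfl hSne
      intro x hx
      have h1 := h x hx
      exact ⟨(hρ x hx h1.1).1, (hγ x hx h1.2).1, h1.1, h1.2⟩
    obtain ⟨x0, hx0S, hfix⟩ := hex
    have hT : ∃ T : Finset P2, T ⊆ S ∧ T.Nonempty ∧ (∀ x ∈ T, ρ x ∈ T ∧ γ x ∈ T) ∧
        (T.filter (fun x => ρ x = x)).card + (T.filter (fun x => γ x = x)).card = 2 ∧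
        IsStaircaseSet F1 F2 T := by
      rcases hfix with hfix | hfix
      · obtain ⟨T, h1, h2, h3, h4, n', p, c1, c2, c3, c4, c5, c6, c7⟩ :=
          extract_path (key1 := fun x => x.1) (key2 := fun x => x.2) hS hρ hγ hx0S hfix
        exact ⟨T, h1, h2, h3, h4, n', p, c1, c2, c3, c4, c5, Or.inr ⟨c6, c7⟩⟩
      · obtain ⟨T, h1, h2, h3, h4, n', p, c1, c2, c3, c4, c5, c6, c7⟩ :=
          extract_path (ρ := γ) (γ := ρ) (key1 := fun x => x.2) (key2 := fun x => x.1)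
            hS hγ hρ hx0S hfix
        refine ⟨T, h1, h2, fun x hx => ⟨(h3 x hx).2, (h3 x hx).1⟩, by omega,
          n', p, c1, c2, c3, c4, c5, Or.inl ⟨c6, c7⟩⟩
    obtain ⟨T, hTS, hTne, hTcl, hTcount, hTst⟩ := hT
    have hS'lt : (S \ T).card < S.card :=
      Finset.card_lt_card (Finset.sdiff_ssubset hTS hTne)
    have hρ' : Pairing (S \ T) F1 F2 (fun x => x.1) ρ := by
      intro x hx hne
      have hxS : x ∈ S := (Finset.mem_sdiff.1 hx).1
      obtain ⟨h1, h2, h3, h4⟩ := hρ x hxS hne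
      refine ⟨Finset.mem_sdiff.2 ⟨h1, fun hxT => ?_⟩, h2, h3, h4⟩
      have := (hTcl (ρ x) hxT).1
      rw [h2] at this
      exact (Finset.mem_sdiff.1 hx).2 this
    have hγ' : Pairing (S \ T) F1 F2 (fun x => x.2) γ := by
      intro x hx hne
      have hxS : x ∈ S := (Finset.mem_sdiff.1 hx).1
      obtain ⟨h1, h2, h3, h4⟩ := hγ x hxS hne
      refine ⟨Finset.mem_sdiff.2 ⟨h1, fun hxT => ?_⟩, h2, h3, h4⟩
      have := (hTcl (γ x) hxT).2
      rw [h2] at this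
      exact (Finset.mem_sdiff.1 hx).2 this
    obtain ⟨Ts, hst, hpw, hun, hcnt⟩ := IH (S \ T) (by omega)
      (fun x hx => hS x (Finset.mem_sdiff.1 hx).1) hρ' hγ'
      (fun C hC => hsw C (hC.trans (Finset.sdiff_subset)))
    refine ⟨T :: Ts, ?_, ?_, ?_, ?_⟩
    · intro T' hT'
      rcases List.mem_cons.1 hT' with rfl | h
      · exact hTst
      · exact hst T' h
    · rw [List.pairwise_cons]
      refine ⟨fun T' hT' => ?_, hpw⟩
      have hT'sub : T' ⊆ S \ T := by
        intro y hy
        rw [← hun]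
        exact (mem_foldr_union Ts).2 ⟨T', hT', hy⟩
      exact Finset.disjoint_sdiff.mono_right hT'sub
    · show T ∪ Ts.foldr (· ∪ ·) ∅ = S
      rw [hun]
      exact Finset.union_sdiff_of_subset hTS
    · have hsplitρ : (S.filter (fun x => ρ x = x)).card
          = (T.filter (fun x => ρ x = x)).card + ((S \ T).filter (fun x => ρ x = x)).card := by
        rw [← Finset.card_union_of_disjoint
          (Finset.disjoint_filter_filter Finset.disjoint_sdiff), ← Finset.filter_union,
          Finset.union_sdiff_of_subset hTS]
      have hsplitγ : (S.filter (fun x => γ x = x)).card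
          = (T.filter (fun x => γ x = x)).card + ((S \ T).filter (fun x => γ x = x)).card := by
        rw [← Finset.card_union_of_disjoint
          (Finset.disjoint_filter_filter Finset.disjoint_sdiff), ← Finset.filter_union,
          Finset.union_sdiff_of_subset hTS]
      simp only [List.length_cons]
      omega

lemma disjoint_sdiffs (F1 F2 : Finset P2) : Disjoint (F1 \ F2) (F2 \ F1) := by
  rw [Finset.disjoint_left]
  intro x hx hy
  rw [Finset.mem_sdiff] at hx hy
  exact hy.2 hx.1

/-- Counting points of `C ∩ (F1\F2)` and `C ∩ (F2\F1)` on a line, when a fixed-point-free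
pairing `g` preserving the line is defined on `C`. -/
lemma swap_line_count {F1 F2 C : Finset P2} {key : P2 → ℤ} {g : P2 → P2}
    (hCS : C ⊆ (F1 \ F2) ∪ (F2 \ F1))
    (hg : Pairing ((F1 \ F2) ∪ (F2 \ F1)) F1 F2 key g)
    (hcl : ∀ x ∈ C, g x ∈ C ∧ g x ≠ x) (i : ℤ) :
    ((C ∩ (F1 \ F2)).filter (fun y => key y = i)).card
      = ((C ∩ (F2 \ F1)).filter (fun y => key y = i)).card := by
  apply Finset.card_nbij' g g
  · intro x hx
    obtain ⟨hxC, hxA⟩ := Finset.mem_inter.1 (Finset.mem_filter.1 hx).1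
    have hkey := (Finset.mem_filter.1 hx).2
    obtain ⟨hgC, hgne⟩ := hcl x hxC
    obtain ⟨h1, h2, h3, h4⟩ := hg x (hCS hxC) hgne
    exact Finset.mem_filter.2 ⟨Finset.mem_inter.2 ⟨hgC, h4.1 hxA⟩, by rw [h3]; exact hkey⟩
  · intro y hy
    obtain ⟨hyC, hyB⟩ := Finset.mem_inter.1 (Finset.mem_filter.1 hy).1
    have hkey := (Finset.mem_filter.1 hy).2
    obtain ⟨hgC, hgne⟩ := hcl y hyC
    obtain ⟨h1, h2, h3, h4⟩ := hg y (hCS hyC) hgne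
    have hyA : y ∉ F1 \ F2 := fun h =>
      (Finset.disjoint_left.1 (disjoint_sdiffs F1 F2) h) hyB
    have hgB : g y ∉ F2 \ F1 := fun h => hyA (h4.2 h)
    have hgA : g y ∈ F1 \ F2 := by
      rcases Finset.mem_union.1 h1 with h | h
      · exact h
      · exact absurd h hgB
    exact Finset.mem_filter.2 ⟨Finset.mem_inter.2 ⟨hgC, hgA⟩, by rw [h3]; exact hkey⟩
  · intro x hx
    obtain ⟨hxC, _⟩ := Finset.mem_inter.1 (Finset.mem_filter.1 hx).1
    exact (hg x (hCS hxC) (hcl x hxC).2).2.1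
  · intro y hy
    obtain ⟨hyC, _⟩ := Finset.mem_inter.1 (Finset.mem_filter.1 hy).1
    exact (hg y (hCS hyC) (hcl y hyC).2).2.1

/-- line sums of the swapped set agree with those of `F1`. -/
lemma swap_line_sum {F1 F2 C : Finset P2} {key : P2 → ℤ} {g : P2 → P2}
    (hCS : C ⊆ (F1 \ F2) ∪ (F2 \ F1))
    (hg : Pairing ((F1 \ F2) ∪ (F2 \ F1)) F1 F2 key g)
    (hcl : ∀ x ∈ C, g x ∈ C ∧ g x ≠ x) (i : ℤ) :
    (((F1 \ (C ∩ (F1 \ F2))) ∪ (C ∩ (F2 \ F1))).filter (fun y => key y = i)).card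
      = (F1.filter (fun y => key y = i)).card := by
  have hCA : C ∩ (F1 \ F2) ⊆ F1 := fun x hx =>
    (Finset.mem_sdiff.1 (Finset.mem_inter.1 hx).2).1
  have hdisj : Disjoint (F1 \ (C ∩ (F1 \ F2))) (C ∩ (F2 \ F1)) := by
    rw [Finset.disjoint_left]
    intro x hx hy
    exact (Finset.mem_sdiff.1 (Finset.mem_inter.1 hy).2).2 (Finset.mem_sdiff.1 hx).1
  have hsd : (F1 \ (C ∩ (F1 \ F2))).filter (fun y => key y = i)
      = F1.filter (fun y => key y = i) \ (C ∩ (F1 \ F2)).filter (fun y => key y = i) := by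
    ext x
    simp only [Finset.mem_filter, Finset.mem_sdiff]
    tauto
  have hsub : (C ∩ (F1 \ F2)).filter (fun y => key y = i)
      ⊆ F1.filter (fun y => key y = i) :=
    Finset.filter_subset_filter _ hCA
  rw [Finset.filter_union,
    Finset.card_union_of_disjoint (Finset.disjoint_filter_filter hdisj), hsd,
    Finset.card_sdiff_of_subset hsub, swap_line_count hCS hg hcl i]
  have hle := Finset.card_le_card hsub
  have := swap_line_count hCS hg hcl i
  omega

/-- The key contradiction: a nonempty "cycle set" contradicts unique determination. -/
lemma cycle_contra {F1 F2 : Finset P2} (hU : UniquelyDetermined F1) {ρ γ : P2 → P2}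
    (hρ : Pairing ((F1 \ F2) ∪ (F2 \ F1)) F1 F2 (fun x => x.1) ρ)
    (hγ : Pairing ((F1 \ F2) ∪ (F2 \ F1)) F1 F2 (fun x => x.2) γ)
    (C : Finset P2) (hCS : C ⊆ (F1 \ F2) ∪ (F2 \ F1)) (hne : C.Nonempty)
    (hcl : ∀ x ∈ C, ρ x ∈ C ∧ γ x ∈ C ∧ ρ x ≠ x ∧ γ x ≠ x) : False := by
  set G := (F1 \ (C ∩ (F1 \ F2))) ∪ (C ∩ (F2 \ F1)) with hG
  have hrows : ∀ i, rowSum G i = rowSum F1 i := fun i =>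
    swap_line_sum hCS hρ (fun x hx => ⟨(hcl x hx).1, (hcl x hx).2.2.1⟩) i
  have hcols : ∀ j, colSum G j = colSum F1 j := fun j =>
    swap_line_sum hCS hγ (fun x hx => ⟨(hcl x hx).2.1, (hcl x hx).2.2.2⟩) j
  have hGF : G = F1 := hU G hrows hcols
  obtain ⟨x, hxC⟩ := hne
  rcases Finset.mem_union.1 (hCS hxC) with hxA | hxB
  · have hxF1 : x ∈ F1 := (Finset.mem_sdiff.1 hxA).1
    have hxG : x ∉ G := by
      rw [hG]
      intro h
      rcases Finset.mem_union.1 h with h | h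
      · exact (Finset.mem_sdiff.1 h).2 (Finset.mem_inter.2 ⟨hxC, hxA⟩)
      · exact (Finset.disjoint_left.1 (disjoint_sdiffs F1 F2) hxA)
          (Finset.mem_inter.1 h).2
    rw [hGF] at hxG
    exact hxG hxF1
  · have hxF1 : x ∉ F1 := (Finset.mem_sdiff.1 hxB).2
    have hxG : x ∈ G := Finset.mem_union_right _ (Finset.mem_inter.2 ⟨hxC, hxB⟩)
    rw [hGF] at hxG
    exact hxF1 hxG

/-- The total line-sum error along one direction equals the number of unpaired points. -/
lemma finsum_error_eq (F1 F2 : Finset P2) (key : P2 → ℤ) :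
    ∑ᶠ i : ℤ, |((F1.filter (fun y => key y = i)).card : ℤ)
        - ((F2.filter (fun y => key y = i)).card : ℤ)|
      = (((((F1 \ F2) ∪ (F2 \ F1))).filter
          (fun x => mkPair (F1 \ F2) (F2 \ F1) key x = x)).card : ℤ) := by
  classical
  set A := F1 \ F2 with hA
  set B := F2 \ F1 with hB
  have hAB : Disjoint A B := disjoint_sdiffs F1 F2
  set I := (F1 ∪ F2).image key with hI
  set f : ℤ → ℤ := fun i => |((F1.filter (fun y => key y = i)).card : ℤ)
        - ((F2.filter (fun y => key y = i)).card : ℤ)| with hf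
  have hsupp : Function.support f ⊆ (I : Set ℤ) := by
    intro i hi
    simp only [Function.mem_support] at hi
    by_contra hiI
    apply hi
    have h1 : F1.filter (fun y => key y = i) = ∅ := by
      rw [Finset.eq_empty_iff_forall_notMem]
      intro x hx
      obtain ⟨hx1, hx2⟩ := Finset.mem_filter.1 hx
      exact hiI (Finset.mem_image.2 ⟨x, Finset.mem_union_left _ hx1, hx2⟩)
    have h2 : F2.filter (fun y => key y = i) = ∅ := by
      rw [Finset.eq_empty_iff_forall_notMem]
      intro x hx
      obtain ⟨hx1, hx2⟩ := Finset.mem_filter.1 hx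
      exact hiI (Finset.mem_image.2 ⟨x, Finset.mem_union_right _ hx1, hx2⟩)
    rw [hf]
    simp [h1, h2]
  rw [finsum_eq_sum_of_support_subset f hsupp]
  -- pointwise rewrite to the per-line fixed count
  have hpt : ∀ i ∈ I, f i
      = ((((A ∪ B).filter (fun y => key y = i)).filter
          (fun x => mkPair A B key x = x)).card : ℤ) := by
    intro i _
    have hF1 : (F1.filter (fun y => key y = i)).card
        = (A.filter (fun y => key y = i)).card
          + ((F1 ∩ F2).filter (fun y => key y = i)).card := by
      rw [← Finset.card_union_of_disjoint, ← Finset.filter_union, hA,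
        Finset.sdiff_union_inter]
      exact Finset.disjoint_filter_filter
        (Finset.disjoint_sdiff_inter F1 F2)
    have hF2 : (F2.filter (fun y => key y = i)).card
        = (B.filter (fun y => key y = i)).card
          + ((F1 ∩ F2).filter (fun y => key y = i)).card := by
      rw [← Finset.card_union_of_disjoint, ← Finset.filter_union, hB]
      · rw [Finset.inter_comm F1 F2, Finset.sdiff_union_inter]
      · rw [Finset.inter_comm F1 F2]
        exact Finset.disjoint_filter_filter (Finset.disjoint_sdiff_inter F2 F1)
    rw [hf, count_fixed_line hAB key i]
    simp only []
    rw [hF1, hF2]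
    push_cast
    congr 1
    ring
  rw [Finset.sum_congr rfl hpt]
  -- sum the per-line fixed counts
  have hfib : ((A ∪ B).filter (fun x => mkPair A B key x = x)).card
      = ∑ i ∈ I, (((A ∪ B).filter (fun x => mkPair A B key x = x)).filter
          (fun x => key x = i)).card := by
    apply Finset.card_eq_sum_card_fiberwise
    intro x hx
    have hx1 := (Finset.mem_filter.1 hx).1
    have : x ∈ F1 ∪ F2 := by
      rcases Finset.mem_union.1 hx1 with h | h
      · exact Finset.mem_union_left _ (Finset.mem_sdiff.1 h).1
      · exact Finset.mem_union_right _ (Finset.mem_sdiff.1 h).1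
    exact Finset.mem_image.2 ⟨x, this, rfl⟩
  rw [hfib]
  push_cast
  apply Finset.sum_congr rfl
  intro i _
  congr 1
  rw [Finset.filter_comm]

theorem symmDiff_partition_into_staircases
    (F1 F2 : Finset (ℤ × ℤ))
    (hU : UniquelyDetermined F1)
    (hcard : F1.card = F2.card)
    (α : ℕ) (hα : 0 < α)
    (herr : lineError F1 F2 = 2 * α) :
    ∃ T : Fin α → Finset (ℤ × ℤ),
      (∀ k, IsStaircaseSet F1 F2 (T k)) ∧
      (∀ k l, k ≠ l → Disjoint (T k) (T l)) ∧
      Finset.univ.biUnion T = (F1 \ F2) ∪ (F2 \ F1) := by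
  classical
  have hAB : Disjoint (F1 \ F2) (F2 \ F1) := disjoint_sdiffs F1 F2
  have hρ : Pairing ((F1 \ F2) ∪ (F2 \ F1)) F1 F2 (fun x => x.1)
      (mkPair (F1 \ F2) (F2 \ F1) (fun x => x.1)) := by
    intro x hx hne
    rcases mkPair_spec hAB (fun x => x.1) x with h | ⟨m1, m2, m3, m4⟩
    · exact absurd h hne
    · exact ⟨m1, m3, m2, m4⟩
  have hγ : Pairing ((F1 \ F2) ∪ (F2 \ F1)) F1 F2 (fun x => x.2)
      (mkPair (F1 \ F2) (F2 \ F1) (fun x => x.2)) := by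
    intro x hx hne
    rcases mkPair_spec hAB (fun x => x.2) x with h | ⟨m1, m2, m3, m4⟩
    · exact absurd h hne
    · exact ⟨m1, m3, m2, m4⟩
  obtain ⟨Ts, hst, hpw, hun, hcnt⟩ := partition_into_staircases F1 F2
    (mkPair (F1 \ F2) (F2 \ F1) (fun x => x.1)) (mkPair (F1 \ F2) (F2 \ F1) (fun x => x.2))
    ((F1 \ F2) ∪ (F2 \ F1)).card ((F1 \ F2) ∪ (F2 \ F1)) le_rfl (fun x hx => hx) hρ hγ
    (fun C hC hne hcl => cycle_contra hU hρ hγ C hC hne hcl)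
  have herr2 : lineError F1 F2
      = ((((F1 \ F2) ∪ (F2 \ F1)).filter
          (fun x => mkPair (F1 \ F2) (F2 \ F1) (fun x => x.1) x = x)).card : ℤ)
        + ((((F1 \ F2) ∪ (F2 \ F1)).filter
          (fun x => mkPair (F1 \ F2) (F2 \ F1) (fun x => x.2) x = x)).card : ℤ) := by
    have h1 : (∑ᶠ i : ℤ, |(rowSum F1 i : ℤ) - (rowSum F2 i : ℤ)|)
        = ((((F1 \ F2) ∪ (F2 \ F1)).filter
          (fun x => mkPair (F1 \ F2) (F2 \ F1) (fun x => x.1) x = x)).card : ℤ) :=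
      finsum_error_eq F1 F2 (fun x => x.1)
    have h2 : (∑ᶠ j : ℤ, |(colSum F1 j : ℤ) - (colSum F2 j : ℤ)|)
        = ((((F1 \ F2) ∪ (F2 \ F1)).filter
          (fun x => mkPair (F1 \ F2) (F2 \ F1) (fun x => x.2) x = x)).card : ℤ) :=
      finsum_error_eq F1 F2 (fun x => x.2)
    rw [lineError, h1, h2]
  have hlen : Ts.length = α := by
    rw [herr] at herr2
    omega
  refine ⟨fun k => Ts.get ⟨k.1, by rw [hlen]; exact k.2⟩, ?_, ?_, ?_⟩
  · intro k
    exact hst _ (Ts.get_mem _)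
  · intro k l hkl
    have hpg := List.pairwise_iff_get.1 hpw
    rcases Nat.lt_trichotomy k.1 l.1 with h | h | h
    · exact hpg _ _ h
    · exact absurd (Fin.ext h) hkl
    · exact (hpg _ _ h).symm
  · ext x
    simp only [Finset.mem_biUnion, Finset.mem_univ, true_and]
    rw [← hun]
    constructor
    · rintro ⟨k, hk⟩
      exact (mem_foldr_union Ts).2 ⟨_, Ts.get_mem _, hk⟩
    · intro hx
      obtain ⟨T', hT'mem, hxT'⟩ := (mem_foldr_union Ts).1 hx
      obtain ⟨i, hi⟩ := List.mem_iff_get.1 hT'mem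
      refine ⟨⟨i.1, by rw [← hlen]; exact i.2⟩, ?_⟩
      have he : (⟨i.1, i.2⟩ : Fin Ts.length) = i := Fin.eta i i.2
      simp only [he, hi]
      exact hxT'
end

section
/- Let F1 and F2 be finite subsets of ℤ² such that F1 is uniquely determined by its row and column sums, |F1| = |F2|, F1 ∩ F2 = ∅, and the error in the line sums equals 2α for a positive integer α. Then |F1| ≤ Σ_{i=1}^{α} ⌊α/i⌋. -/
def rowSupp (F : Finset (ℤ × ℤ)) (x : ℤ) : Finset ℤ :=
  (F.filter (fun p => p.1 = x)).image Prod.snd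
def colSupp (F : Finset (ℤ × ℤ)) (y : ℤ) : Finset ℤ :=
  (F.filter (fun p => p.2 = y)).image Prod.fst

lemma mem_rowSupp {F : Finset (ℤ × ℤ)} {x b : ℤ} : b ∈ rowSupp F x ↔ (x, b) ∈ F := by
  simp only [rowSupp, Finset.mem_image, Finset.mem_filter]
  constructor
  · rintro ⟨⟨a, c⟩, ⟨hm, rfl⟩, rfl⟩; exact hm
  · intro h; exact ⟨(x, b), ⟨h, rfl⟩, rfl⟩

lemma mem_colSupp {F : Finset (ℤ × ℤ)} {y a : ℤ} : a ∈ colSupp F y ↔ (a, y) ∈ F := by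
  simp only [colSupp, Finset.mem_image, Finset.mem_filter]
  constructor
  · rintro ⟨⟨c, d⟩, ⟨hm, rfl⟩, rfl⟩; exact hm
  · intro h; exact ⟨(a, y), ⟨h, rfl⟩, rfl⟩

lemma rowSupp_card (F : Finset (ℤ × ℤ)) (x : ℤ) : (rowSupp F x).card = rowSum F x := by
  apply Finset.card_image_of_injOn
  intro p hp q hq h
  simp only [Finset.coe_filter, Set.mem_setOf_eq] at hp hq
  exact Prod.ext (hp.2.trans hq.2.symm) h

lemma colSupp_card (F : Finset (ℤ × ℤ)) (y : ℤ) : (colSupp F y).card = colSum F y := by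
  apply Finset.card_image_of_injOn
  intro p hp q hq h
  simp only [Finset.coe_filter, Set.mem_setOf_eq] at hp hq
  exact Prod.ext h (hp.2.trans hq.2.symm)

lemma rowSum_insert {F : Finset (ℤ × ℤ)} {a : ℤ × ℤ} (h : a ∉ F) (i : ℤ) :
    rowSum (insert a F) i = rowSum F i + if a.1 = i then 1 else 0 := by
  unfold rowSum
  rw [Finset.filter_insert]
  split_ifs with hc
  · rw [Finset.card_insert_of_notMem (fun hm => h (Finset.mem_filter.mp hm).1)]
  · rfl

lemma rowSum_erase {F : Finset (ℤ × ℤ)} {a : ℤ × ℤ} (h : a ∈ F) (i : ℤ) :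
    rowSum F i = rowSum (F.erase a) i + if a.1 = i then 1 else 0 := by
  have h2 : a ∉ F.erase a := Finset.notMem_erase a F
  have := rowSum_insert h2 i
  rw [Finset.insert_erase h] at this
  exact this

lemma colSum_insert {F : Finset (ℤ × ℤ)} {a : ℤ × ℤ} (h : a ∉ F) (i : ℤ) :
    colSum (insert a F) i = colSum F i + if a.2 = i then 1 else 0 := by
  unfold colSum
  rw [Finset.filter_insert]
  split_ifs with hc
  · rw [Finset.card_insert_of_notMem (fun hm => h (Finset.mem_filter.mp hm).1)]
  · rfl

lemma colSum_erase {F : Finset (ℤ × ℤ)} {a : ℤ × ℤ} (h : a ∈ F) (i : ℤ) :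
    colSum F i = colSum (F.erase a) i + if a.2 = i then 1 else 0 := by
  have h2 : a ∉ F.erase a := Finset.notMem_erase a F
  have := colSum_insert h2 i
  rw [Finset.insert_erase h] at this
  exact this

lemma rowSupp_chain {F : Finset (ℤ × ℤ)} (hU : UniquelyDetermined F) (x x' : ℤ) :
    rowSupp F x ⊆ rowSupp F x' ∨ rowSupp F x' ⊆ rowSupp F x := by
  by_contra hcon
  push_neg at hcon
  obtain ⟨h1, h2⟩ := hcon
  rw [Finset.not_subset] at h1 h2
  obtain ⟨y', hy'1, hy'2⟩ := h1   -- y' ∈ rowSupp x', y' ∉ rowSupp x  ... careful order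
  obtain ⟨y, hy1, hy2⟩ := h2
  -- hy'1 : y' ∈ rowSupp F x, hy'2 : y' ∉ rowSupp F x'  (from ¬ rowSupp x ⊆ rowSupp x')
  -- hy1 : y ∈ rowSupp F x', hy2 : y ∉ rowSupp F x
  rw [mem_rowSupp] at hy'1 hy1
  have hxy' : (x, y') ∈ F := hy'1
  have hx'y : (x', y) ∈ F := hy1
  have hxy : (x, y) ∉ F := fun h => hy2 (mem_rowSupp.mpr h)
  have hx'y' : (x', y') ∉ F := fun h => hy'2 (mem_rowSupp.mpr h)
  have hxx : x ≠ x' := by rintro rfl; exact hx'y' hxy'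
  have hyy : y ≠ y' := by rintro rfl; exact hxy hxy'
  set F0 := (F.erase (x, y')).erase (x', y) with hF0
  have hm1 : (x, y') ∈ F.erase (x', y) := by
    refine Finset.mem_erase.mpr ⟨?_, hxy'⟩
    simp [Prod.ext_iff]; tauto
  have hm0a : (x', y) ∉ F0 := Finset.notMem_erase _ _
  have hF0' : F0 = (F.erase (x', y)).erase (x, y') := Finset.erase_right_comm
  have hm0b : (x, y') ∉ F0 := by rw [hF0']; exact Finset.notMem_erase _ _
  have hsub0 : F0 ⊆ F := (Finset.erase_subset _ _).trans (Finset.erase_subset _ _)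
  have hxyF0 : (x, y) ∉ F0 := fun h => hxy (hsub0 h)
  have hx'y'F0 : (x', y') ∉ F0 := fun h => hx'y' (hsub0 h)
  set G := insert (x, y) (insert (x', y') F0) with hG
  have hne1 : (x', y') ∉ insert (x', y) F0 := by
    intro h
    rcases Finset.mem_insert.mp h with h | h
    · exact hyy (congrArg Prod.snd h).symm
    · exact hx'y'F0 h
  have hne2 : (x, y) ∉ insert (x', y') F0 := by
    intro h
    rcases Finset.mem_insert.mp h with h | h
    · exact hxx (congrArg Prod.fst h)
    · exact hxyF0 h
  have hrow : ∀ i, rowSum G i = rowSum F i := by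
    intro i
    have e1 := rowSum_insert hne2 i
    have e2 := rowSum_insert (F := F0) hx'y'F0 i
    have e3 := rowSum_erase (F := F) hxy' i
    have e4 : (x', y) ∈ F.erase (x, y') := by
      refine Finset.mem_erase.mpr ⟨?_, hx'y⟩
      simp [Prod.ext_iff]; tauto
    have e5 := rowSum_erase e4 i
    simp only [hG] at e1 ⊢
    rw [e1, e2, e3, e5, ← hF0] <;> (try (split_ifs <;> omega))
  have hcol : ∀ j, colSum G j = colSum F j := by
    intro j
    have e1 := colSum_insert hne2 j
    have e2 := colSum_insert (F := F0) hx'y'F0 j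
    have e3 := colSum_erase (F := F) hxy' j
    have e4 : (x', y) ∈ F.erase (x, y') := by
      refine Finset.mem_erase.mpr ⟨?_, hx'y⟩
      simp [Prod.ext_iff]; tauto
    have e5 := colSum_erase e4 j
    simp only [hG] at e1 ⊢
    rw [e1, e2, e3, e5, ← hF0] <;> (try (split_ifs <;> omega))
  have hGF : G = F := hU G hrow hcol
  have : (x, y) ∈ F := hGF ▸ Finset.mem_insert_self _ _
  exact hxy this

section
variable {F : Finset (ℤ × ℤ)} (hU : UniquelyDetermined F)

lemma rowSupp_mono (hU : UniquelyDetermined F) {x x' : ℤ} (h : rowSum F x ≤ rowSum F x') :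
    rowSupp F x ⊆ rowSupp F x' := by
  rcases rowSupp_chain hU x x' with hc | hc
  · exact hc
  · have : rowSupp F x' = rowSupp F x :=
      Finset.eq_of_subset_of_card_le hc (by rw [rowSupp_card, rowSupp_card]; exact h)
    rw [← this]

lemma colSupp_chain (hU : UniquelyDetermined F) (y y' : ℤ) :
    colSupp F y ⊆ colSupp F y' ∨ colSupp F y' ⊆ colSupp F y := by
  by_contra hcon
  push_neg at hcon
  obtain ⟨h1, h2⟩ := hcon
  rw [Finset.not_subset] at h1 h2
  obtain ⟨a, ha1, ha2⟩ := h1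
  obtain ⟨a', ha'1, ha'2⟩ := h2
  rw [mem_colSupp] at ha1 ha'1
  rcases rowSupp_chain hU a a' with hc | hc
  · exact ha'2 (mem_colSupp.mpr (mem_rowSupp.mp (hc (mem_rowSupp.mpr ha1))))
  · exact ha2 (mem_colSupp.mpr (mem_rowSupp.mp (hc (mem_rowSupp.mpr ha'1))))

lemma colSupp_mono (hU : UniquelyDetermined F) {y y' : ℤ} (h : colSum F y ≤ colSum F y') :
    colSupp F y ⊆ colSupp F y' := by
  rcases colSupp_chain hU y y' with hc | hc
  · exact hc
  · have : colSupp F y' = colSupp F y :=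
      Finset.eq_of_subset_of_card_le hc (by rw [colSupp_card, colSupp_card]; exact h)
    rw [← this]

end

/-- Sum of row sums over a set containing all rows equals the cardinality. -/
lemma sum_rowSum_eq_card {F : Finset (ℤ × ℤ)} {T : Finset ℤ}
    (h : ∀ p ∈ F, p.1 ∈ T) : ∑ i ∈ T, rowSum F i = F.card :=
  (Finset.card_eq_sum_card_fiberwise h).symm

lemma sum_colSum_eq_card {F : Finset (ℤ × ℤ)} {T : Finset ℤ}
    (h : ∀ p ∈ F, p.2 ∈ T) : ∑ j ∈ T, colSum F j = F.card :=
  (Finset.card_eq_sum_card_fiberwise h).symm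

/-- Sum of row sums over any finite set R equals the number of points in those rows. -/
lemma sum_rowSum_eq_filter_card (F : Finset (ℤ × ℤ)) (R : Finset ℤ) :
    ∑ i ∈ R, rowSum F i = (F.filter (fun p => p.1 ∈ R)).card := by
  rw [Finset.card_eq_sum_card_fiberwise (f := Prod.fst) (s := F.filter (fun p => p.1 ∈ R)) (t := R)
      (fun p hp => (Finset.mem_filter.mp hp).2)]
  apply Finset.sum_congr rfl
  intro i hi
  unfold rowSum
  rw [Finset.filter_filter]
  congr 1
  apply Finset.filter_congr
  intro p hp
  simp only [iff_and_self]
  rintro rfl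
  exact hi

lemma sum_colSum_eq_filter_card (F : Finset (ℤ × ℤ)) (C : Finset ℤ) :
    ∑ j ∈ C, colSum F j = (F.filter (fun p => p.2 ∈ C)).card := by
  rw [Finset.card_eq_sum_card_fiberwise (f := Prod.snd) (s := F.filter (fun p => p.2 ∈ C)) (t := C)
      (fun p hp => (Finset.mem_filter.mp hp).2)]
  apply Finset.sum_congr rfl
  intro j hj
  unfold colSum
  rw [Finset.filter_filter]
  congr 1
  apply Finset.filter_congr
  intro p hp
  simp only [iff_and_self]
  rintro rfl
  exact hj

lemma finsum_abs_row (F1 F2 : Finset (ℤ × ℤ)) (hcard : F1.card = F2.card) (R : Finset ℤ) :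
    2 * ∑ i ∈ R, ((rowSum F1 i : ℤ) - (rowSum F2 i : ℤ)) ≤
      ∑ᶠ i : ℤ, |(rowSum F1 i : ℤ) - (rowSum F2 i : ℤ)| := by
  classical
  set d : ℤ → ℤ := fun i => (rowSum F1 i : ℤ) - (rowSum F2 i : ℤ) with hd
  set T : Finset ℤ := ((F1 ∪ F2).image Prod.fst) ∪ R with hT
  have hsupp : Function.support d ⊆ ↑T := by
    intro i hi
    simp only [Function.mem_support, hd] at hi
    by_contra hiT
    apply hi
    have h1 : rowSum F1 i = 0 := by
      rw [rowSum, Finset.card_eq_zero, Finset.filter_eq_empty_iff]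
      intro p hp hpi
      exact hiT (Finset.mem_union_left _ (Finset.mem_image.mpr
        ⟨p, Finset.mem_union_left _ hp, hpi⟩))
    have h2 : rowSum F2 i = 0 := by
      rw [rowSum, Finset.card_eq_zero, Finset.filter_eq_empty_iff]
      intro p hp hpi
      exact hiT (Finset.mem_union_left _ (Finset.mem_image.mpr
        ⟨p, Finset.mem_union_right _ hp, hpi⟩))
    rw [h1, h2]; ring
  have heq : ∑ᶠ i : ℤ, |d i| = ∑ i ∈ T, |d i| := by
    apply finsum_eq_finset_sum_of_support_subset
    intro i hi
    apply hsupp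
    simp only [Function.mem_support] at hi ⊢
    intro h; exact hi (by rw [h]; simp)
  have hRT : R ⊆ T := Finset.subset_union_right
  have htot : ∑ i ∈ T, d i = 0 := by
    have h1 : ∑ i ∈ T, (rowSum F1 i : ℤ) = (F1.card : ℤ) := by
      rw [← Nat.cast_sum]
      norm_cast
      apply sum_rowSum_eq_card
      intro p hp
      exact Finset.mem_union_left _ (Finset.mem_image.mpr ⟨p, Finset.mem_union_left _ hp, rfl⟩)
    have h2 : ∑ i ∈ T, (rowSum F2 i : ℤ) = (F2.card : ℤ) := by
      rw [← Nat.cast_sum]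
      norm_cast
      apply sum_rowSum_eq_card
      intro p hp
      exact Finset.mem_union_left _ (Finset.mem_image.mpr ⟨p, Finset.mem_union_right _ hp, rfl⟩)
    simp only [hd, Finset.sum_sub_distrib, h1, h2, hcard, sub_self]
  have hsplit : ∑ i ∈ T \ R, d i + ∑ i ∈ R, d i = ∑ i ∈ T, d i := Finset.sum_sdiff hRT
  have habs1 : ∑ i ∈ R, d i ≤ ∑ i ∈ R, |d i| := Finset.sum_le_sum (fun i _ => le_abs_self _)
  have habs2 : ∑ i ∈ R, d i ≤ ∑ i ∈ T \ R, |d i| := by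
    have : ∑ i ∈ T \ R, d i = - ∑ i ∈ R, d i := by omega
    calc ∑ i ∈ R, d i = - ∑ i ∈ T \ R, d i := by omega
    _ ≤ ∑ i ∈ T \ R, |d i| := by
        rw [← Finset.sum_neg_distrib]
        exact Finset.sum_le_sum (fun i _ => neg_le_abs _)
  have hsplitabs : ∑ i ∈ T \ R, |d i| + ∑ i ∈ R, |d i| = ∑ i ∈ T, |d i| := Finset.sum_sdiff hRT
  rw [heq]
  linarith

lemma finsum_abs_col (F1 F2 : Finset (ℤ × ℤ)) (hcard : F1.card = F2.card) (R : Finset ℤ) :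
    2 * ∑ i ∈ R, ((colSum F1 i : ℤ) - (colSum F2 i : ℤ)) ≤
      ∑ᶠ i : ℤ, |(colSum F1 i : ℤ) - (colSum F2 i : ℤ)| := by
  classical
  set d : ℤ → ℤ := fun i => (colSum F1 i : ℤ) - (colSum F2 i : ℤ) with hd
  set T : Finset ℤ := ((F1 ∪ F2).image Prod.snd) ∪ R with hT
  have hsupp : Function.support d ⊆ ↑T := by
    intro i hi
    simp only [Function.mem_support, hd] at hi
    by_contra hiT
    apply hi
    have h1 : colSum F1 i = 0 := by
      rw [colSum, Finset.card_eq_zero, Finset.filter_eq_empty_iff]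
      intro p hp hpi
      exact hiT (Finset.mem_union_left _ (Finset.mem_image.mpr
        ⟨p, Finset.mem_union_left _ hp, hpi⟩))
    have h2 : colSum F2 i = 0 := by
      rw [colSum, Finset.card_eq_zero, Finset.filter_eq_empty_iff]
      intro p hp hpi
      exact hiT (Finset.mem_union_left _ (Finset.mem_image.mpr
        ⟨p, Finset.mem_union_right _ hp, hpi⟩))
    rw [h1, h2]; ring
  have heq : ∑ᶠ i : ℤ, |d i| = ∑ i ∈ T, |d i| := by
    apply finsum_eq_finset_sum_of_support_subset
    intro i hi
    apply hsupp
    simp only [Function.mem_support] at hi ⊢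
    intro h; exact hi (by rw [h]; simp)
  have hRT : R ⊆ T := Finset.subset_union_right
  have htot : ∑ i ∈ T, d i = 0 := by
    have h1 : ∑ i ∈ T, (colSum F1 i : ℤ) = (F1.card : ℤ) := by
      rw [← Nat.cast_sum]
      norm_cast
      apply sum_colSum_eq_card
      intro p hp
      exact Finset.mem_union_left _ (Finset.mem_image.mpr ⟨p, Finset.mem_union_left _ hp, rfl⟩)
    have h2 : ∑ i ∈ T, (colSum F2 i : ℤ) = (F2.card : ℤ) := by
      rw [← Nat.cast_sum]
      norm_cast
      apply sum_colSum_eq_card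
      intro p hp
      exact Finset.mem_union_left _ (Finset.mem_image.mpr ⟨p, Finset.mem_union_right _ hp, rfl⟩)
    simp only [hd, Finset.sum_sub_distrib, h1, h2, hcard, sub_self]
  have hsplit : ∑ i ∈ T \ R, d i + ∑ i ∈ R, d i = ∑ i ∈ T, d i := Finset.sum_sdiff hRT
  have habs1 : ∑ i ∈ R, d i ≤ ∑ i ∈ R, |d i| := Finset.sum_le_sum (fun i _ => le_abs_self _)
  have habs2 : ∑ i ∈ R, d i ≤ ∑ i ∈ T \ R, |d i| := by
    have : ∑ i ∈ T \ R, d i = - ∑ i ∈ R, d i := by omega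
    calc ∑ i ∈ R, d i = - ∑ i ∈ T \ R, d i := by omega
    _ ≤ ∑ i ∈ T \ R, |d i| := by
        rw [← Finset.sum_neg_distrib]
        exact Finset.sum_le_sum (fun i _ => neg_le_abs _)
  have hsplitabs : ∑ i ∈ T \ R, |d i| + ∑ i ∈ R, |d i| = ∑ i ∈ T, |d i| := Finset.sum_sdiff hRT
  rw [heq]
  linarith

lemma rect_bound (F1 F2 : Finset (ℤ × ℤ)) (hcard : F1.card = F2.card)
    (hdisj : F1 ∩ F2 = ∅) (α : ℕ) (herr : lineError F1 F2 = 2 * α)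
    (R C : Finset ℤ)
    (hRC : ∀ a ∈ R, ∀ b ∈ C, (a, b) ∈ F1)
    (hZ : ∀ p ∈ F1, p.1 ∈ R ∨ p.2 ∈ C) :
    R.card * C.card ≤ α := by
  classical
  have hrow := finsum_abs_row F1 F2 hcard R
  have hcol := finsum_abs_col F1 F2 hcard C
  -- key counting in ℕ
  have hkey : F1.card + R.card * C.card ≤
      (∑ i ∈ R, rowSum F1 i) + (∑ j ∈ C, colSum F1 j) := by
    rw [sum_rowSum_eq_filter_card, sum_colSum_eq_filter_card]
    have hie : (F1.filter (fun p => p.1 ∈ R)).card + (F1.filter (fun p => p.2 ∈ C)).card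
        = (F1.filter (fun p => p.1 ∈ R ∨ p.2 ∈ C)).card
          + (F1.filter (fun p => p.1 ∈ R ∧ p.2 ∈ C)).card := by
      rw [Finset.filter_or, Finset.filter_and]
      exact (Finset.card_union_add_card_inter _ _).symm
    have h1 : (F1.filter (fun p => p.1 ∈ R ∨ p.2 ∈ C)).card = F1.card := by
      rw [Finset.filter_true_of_mem hZ]
    have h2 : (F1.filter (fun p => p.1 ∈ R ∧ p.2 ∈ C)).card = R.card * C.card := by
      have : F1.filter (fun p => p.1 ∈ R ∧ p.2 ∈ C) = R ×ˢ C := by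
        apply Finset.ext
        intro p
        simp only [Finset.mem_filter, Finset.mem_product]
        constructor
        · rintro ⟨_, h⟩; exact h
        · rintro ⟨h1, h2⟩; exact ⟨hRC _ h1 _ h2, h1, h2⟩
      rw [this, Finset.card_product]
    omega
  have hkey2 : (∑ i ∈ R, rowSum F2 i) + (∑ j ∈ C, colSum F2 j) ≤ F2.card := by
    rw [sum_rowSum_eq_filter_card, sum_colSum_eq_filter_card]
    have hie : (F2.filter (fun p => p.1 ∈ R)).card + (F2.filter (fun p => p.2 ∈ C)).card
        = (F2.filter (fun p => p.1 ∈ R ∨ p.2 ∈ C)).card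
          + (F2.filter (fun p => p.1 ∈ R ∧ p.2 ∈ C)).card := by
      rw [Finset.filter_or, Finset.filter_and]
      exact (Finset.card_union_add_card_inter _ _).symm
    have h2 : (F2.filter (fun p => p.1 ∈ R ∧ p.2 ∈ C)).card = 0 := by
      rw [Finset.card_eq_zero, Finset.filter_eq_empty_iff]
      rintro ⟨a, b⟩ hp ⟨h1, h2⟩
      have : (a, b) ∈ F1 ∩ F2 := Finset.mem_inter.mpr ⟨hRC _ h1 _ h2, hp⟩
      rw [hdisj] at this
      exact absurd this (Finset.notMem_empty _)
    have h3 := Finset.card_filter_le F2 (fun p => p.1 ∈ R ∨ p.2 ∈ C)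
    omega
  -- combine over ℤ
  have hsum : ((R.card * C.card : ℕ) : ℤ) ≤
      (∑ i ∈ R, ((rowSum F1 i : ℤ) - (rowSum F2 i : ℤ)))
      + (∑ j ∈ C, ((colSum F1 j : ℤ) - (colSum F2 j : ℤ))) := by
    have e1 : ∑ i ∈ R, ((rowSum F1 i : ℤ) - (rowSum F2 i : ℤ))
        = ((∑ i ∈ R, rowSum F1 i : ℕ) : ℤ) - ((∑ i ∈ R, rowSum F2 i : ℕ) : ℤ) := by
      push_cast
      rw [Finset.sum_sub_distrib]
    have e2 : ∑ j ∈ C, ((colSum F1 j : ℤ) - (colSum F2 j : ℤ))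
        = ((∑ j ∈ C, colSum F1 j : ℕ) : ℤ) - ((∑ j ∈ C, colSum F2 j : ℕ) : ℤ) := by
      push_cast
      rw [Finset.sum_sub_distrib]
    rw [e1, e2]
    have := hcard
    push_cast
    push_cast at hkey hkey2
    rw [hcard] at hkey
    linarith [hkey, hkey2]
  have herr' : (∑ᶠ i : ℤ, |(rowSum F1 i : ℤ) - (rowSum F2 i : ℤ)|)
      + (∑ᶠ j : ℤ, |(colSum F1 j : ℤ) - (colSum F2 j : ℤ)|) = 2 * α := herr
  have : (2 : ℤ) * (R.card * C.card : ℕ) ≤ 2 * α := by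
    calc (2 : ℤ) * (R.card * C.card : ℕ)
        ≤ 2 * ((∑ i ∈ R, ((rowSum F1 i : ℤ) - (rowSum F2 i : ℤ)))
          + (∑ j ∈ C, ((colSum F1 j : ℤ) - (colSum F2 j : ℤ)))) := by linarith
      _ ≤ 2 * α := by rw [← herr']; linarith [hrow, hcol]
  have := (mul_le_mul_iff_right₀ (by norm_num : (0:ℤ) < 2)).mp this
  exact_mod_cast this

def rowsOf (F : Finset (ℤ × ℤ)) : Finset ℤ := F.image Prod.fst

/-- The set of rows ranked at or before row `x` (by decreasing row sum, ties by index). -/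
def Iset (F : Finset (ℤ × ℤ)) (x : ℤ) : Finset ℤ :=
  (rowsOf F).filter (fun x' => rowSum F x < rowSum F x' ∨ (rowSum F x' = rowSum F x ∧ x' ≤ x))

/-- The set of columns in row `p.1`'s support ranked at or before `p.2`. -/
def Jset (F : Finset (ℤ × ℤ)) (p : ℤ × ℤ) : Finset ℤ :=
  (rowSupp F p.1).filter
    (fun y' => colSum F p.2 < colSum F y' ∨ (colSum F y' = colSum F p.2 ∧ y' ≤ p.2))

section
variable {F : Finset (ℤ × ℤ)}

lemma self_mem_Iset {p : ℤ × ℤ} (hp : p ∈ F) : p.1 ∈ Iset F p.1 := by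
  refine Finset.mem_filter.mpr ⟨Finset.mem_image.mpr ⟨p, hp, rfl⟩, Or.inr ⟨rfl, le_refl _⟩⟩

lemma self_mem_Jset {p : ℤ × ℤ} (hp : p ∈ F) : p.2 ∈ Jset F p := by
  refine Finset.mem_filter.mpr ⟨mem_rowSupp.mpr ?_, Or.inr ⟨rfl, le_refl _⟩⟩
  exact hp

/-- If `a` is a row not in `Iset F x`, then `Iset F x` is strictly below `Iset F a`. -/
lemma Iset_lt {x a : ℤ} (ha : a ∈ rowsOf F) (hnot : a ∉ Iset F x) :
    (Iset F x).card < (Iset F a).card := by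
  have hord : ¬(rowSum F x < rowSum F a ∨ (rowSum F a = rowSum F x ∧ a ≤ x)) :=
    fun h => hnot (Finset.mem_filter.mpr ⟨ha, h⟩)
  push_neg at hord
  have hsub : insert a (Iset F x) ⊆ Iset F a := by
    intro x'' hx''
    rcases Finset.mem_insert.mp hx'' with rfl | hx''
    · exact Finset.mem_filter.mpr ⟨ha, Or.inr ⟨rfl, le_refl _⟩⟩
    · obtain ⟨hr, hcase⟩ := Finset.mem_filter.mp hx''
      refine Finset.mem_filter.mpr ⟨hr, ?_⟩
      obtain ⟨h1, h2⟩ := hord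
      omega
  calc (Iset F x).card < (insert a (Iset F x)).card := by
        rw [Finset.card_insert_of_notMem hnot]; omega
    _ ≤ (Iset F a).card := Finset.card_le_card hsub

lemma Jset_lt (hU : UniquelyDetermined F) {p : ℤ × ℤ} {a b : ℤ}
    (hab : (a, b) ∈ F)
    (hsub : rowSupp F a ⊆ rowSupp F p.1) (hnot : b ∉ Jset F p) :
    (Jset F p).card < (Jset F (a, b)).card := by
  have hbx : b ∈ rowSupp F p.1 := hsub (mem_rowSupp.mpr hab)
  have hord : ¬(colSum F p.2 < colSum F b ∨ (colSum F b = colSum F p.2 ∧ b ≤ p.2)) :=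
    fun h => hnot (Finset.mem_filter.mpr ⟨hbx, h⟩)
  push_neg at hord
  obtain ⟨h1, h2⟩ := hord
  have hsub2 : insert b (Jset F p) ⊆ Jset F (a, b) := by
    intro y'' hy''
    rcases Finset.mem_insert.mp hy'' with rfl | hy''
    · exact Finset.mem_filter.mpr ⟨mem_rowSupp.mpr hab, Or.inr ⟨rfl, le_refl _⟩⟩
    · obtain ⟨hr, hcase⟩ := Finset.mem_filter.mp hy''
      have hcs : colSum F b ≤ colSum F y'' := by omega
      have hmem : y'' ∈ rowSupp F a := by
        have := colSupp_mono hU hcs (mem_colSupp.mpr hab)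
        exact mem_rowSupp.mpr (mem_colSupp.mp this)
      refine Finset.mem_filter.mpr ⟨hmem, ?_⟩
      rw [show ((a, b) : ℤ × ℤ).2 = b from rfl]
      omega
  calc (Jset F p).card < (insert b (Jset F p)).card := by
        rw [Finset.card_insert_of_notMem hnot]; omega
    _ ≤ (Jset F (a, b)).card := Finset.card_le_card hsub2

/-- injectivity of the rank map. -/
lemma rank_inj (hU : UniquelyDetermined F) {p q : ℤ × ℤ} (hp : p ∈ F) (hq : q ∈ F)
    (hI : (Iset F p.1).card = (Iset F q.1).card)
    (hJ : (Jset F p).card = (Jset F q).card) : p = q := by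
  have hprow : p.1 ∈ rowsOf F := Finset.mem_image.mpr ⟨p, hp, rfl⟩
  have hqrow : q.1 ∈ rowsOf F := Finset.mem_image.mpr ⟨q, hq, rfl⟩
  have h1 : q.1 ∈ Iset F p.1 := by
    by_contra hcon
    exact absurd hI (Nat.ne_of_lt (Iset_lt hqrow hcon))
  have h2 : p.1 ∈ Iset F q.1 := by
    by_contra hcon
    exact absurd hI.symm (Nat.ne_of_lt (Iset_lt hprow hcon))
  have hx : p.1 = q.1 := by
    have o1 := (Finset.mem_filter.mp h1).2
    have o2 := (Finset.mem_filter.mp h2).2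
    omega
  have hq' : (p.1, q.2) ∈ F := by
    rw [hx]; exact (Prod.mk.eta (p := q)) ▸ hq
  have hJq : Jset F q = Jset F (p.1, q.2) := by
    rw [show ((p.1, q.2) : ℤ × ℤ) = q from Prod.ext hx rfl]
  have h3 : q.2 ∈ Jset F p := by
    by_contra hcon
    have := Jset_lt hU hq' subset_rfl hcon
    rw [← hJq] at this
    exact absurd hJ (Nat.ne_of_lt this)
  have hp' : (q.1, p.2) ∈ F := by
    rw [← hx]; exact (Prod.mk.eta (p := p)) ▸ hp
  have hJp : Jset F p = Jset F (q.1, p.2) := by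
    rw [show ((q.1, p.2) : ℤ × ℤ) = p from Prod.ext hx.symm rfl]
  have h4 : p.2 ∈ Jset F q := by
    by_contra hcon
    have := Jset_lt hU hp' subset_rfl hcon
    rw [← hJp] at this
    exact absurd hJ.symm (Nat.ne_of_lt this)
  have hy : p.2 = q.2 := by
    have o1 := (Finset.mem_filter.mp h3).2
    have o2 := (Finset.mem_filter.mp h4).2
    omega
  exact Prod.ext hx hy

/-- The rectangle property. -/
lemma Iset_Jset_rect (hU : UniquelyDetermined F) (p : ℤ × ℤ) :
    ∀ a ∈ Iset F p.1, ∀ b ∈ Jset F p, (a, b) ∈ F := by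
  intro a ha b hb
  obtain ⟨_, hord⟩ := Finset.mem_filter.mp ha
  have hle : rowSum F p.1 ≤ rowSum F a := by omega
  have := rowSupp_mono hU hle (Finset.mem_filter.mp hb).1
  exact mem_rowSupp.mp this

end

lemma exists_corner {F : Finset (ℤ × ℤ)} (hU : UniquelyDetermined F) {p : ℤ × ℤ}
    (hp : p ∈ F) :
    ∃ q ∈ F, (Iset F p.1).card ≤ (Iset F q.1).card ∧ (Jset F p).card ≤ (Jset F q).card ∧
      ∀ r ∈ F, r.1 ∈ Iset F q.1 ∨ r.2 ∈ Jset F q := by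
  classical
  set S := F.filter (fun r =>
    (Iset F p.1).card ≤ (Iset F r.1).card ∧ (Jset F p).card ≤ (Jset F r).card) with hS
  have hpS : p ∈ S := Finset.mem_filter.mpr ⟨hp, le_refl _, le_refl _⟩
  obtain ⟨q, hqS, hmax⟩ := S.exists_max_image
    (fun r => (Iset F r.1).card + (Jset F r).card) ⟨p, hpS⟩
  obtain ⟨hqF, hqI, hqJ⟩ := Finset.mem_filter.mp hqS
  refine ⟨q, hqF, hqI, hqJ, ?_⟩
  intro r hr
  by_contra hcon
  push_neg at hcon
  obtain ⟨h1, h2⟩ := hcon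
  have hrrow : r.1 ∈ rowsOf F := Finset.mem_image.mpr ⟨r, hr, rfl⟩
  have hIlt : (Iset F q.1).card < (Iset F r.1).card := Iset_lt hrrow h1
  have hle : rowSum F r.1 ≤ rowSum F q.1 := by
    have : ¬(rowSum F q.1 < rowSum F r.1 ∨
        (rowSum F r.1 = rowSum F q.1 ∧ r.1 ≤ q.1)) :=
      fun h => h1 (Finset.mem_filter.mpr ⟨hrrow, h⟩)
    push_neg at this
    exact this.1
  have hsub : rowSupp F r.1 ⊆ rowSupp F q.1 := rowSupp_mono hU hle
  have hJlt : (Jset F q).card < (Jset F r).card := by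
    have hab : (r.1, r.2) ∈ F := hr
    have := Jset_lt hU hab hsub h2
    exact this
  have hrS : r ∈ S := Finset.mem_filter.mpr ⟨hr, by omega, by omega⟩
  have := hmax r hrS
  omega

theorem disjoint_bound
    (F1 F2 : Finset (ℤ × ℤ))
    (hU : UniquelyDetermined F1)
    (hcard : F1.card = F2.card)
    (hdisj : F1 ∩ F2 = ∅)
    (α : ℕ) (hα : 0 < α)
    (herr : lineError F1 F2 = 2 * α) :
    F1.card ≤ ∑ i ∈ Finset.Icc 1 α, α / i := by
  classical
  have key : ∀ p ∈ F1, 1 ≤ (Iset F1 p.1).card ∧ 1 ≤ (Jset F1 p).card ∧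
      (Iset F1 p.1).card * (Jset F1 p).card ≤ α := by
    intro p hp
    refine ⟨Finset.card_pos.mpr ⟨p.1, self_mem_Iset hp⟩,
      Finset.card_pos.mpr ⟨p.2, self_mem_Jset hp⟩, ?_⟩
    obtain ⟨q, hqF, hqI, hqJ, hZ⟩ := exists_corner hU hp
    have hb := rect_bound F1 F2 hcard hdisj α herr (Iset F1 q.1) (Jset F1 q)
      (Iset_Jset_rect hU q) hZ
    calc (Iset F1 p.1).card * (Jset F1 p).card
        ≤ (Iset F1 q.1).card * (Jset F1 q).card := Nat.mul_le_mul hqI hqJ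
      _ ≤ α := hb
  set target := (Finset.Icc 1 α).sigma (fun i => Finset.Icc 1 (α / i)) with htarget
  have hmain : F1.card ≤ target.card := by
    apply Finset.card_le_card_of_injOn
      (fun p => (⟨(Iset F1 p.1).card, (Jset F1 p).card⟩ : Σ _ : ℕ, ℕ))
    · intro p hp
      obtain ⟨h1, h2, h3⟩ := key p hp
      rw [htarget, Finset.mem_coe, Finset.mem_sigma]
      constructor
      · rw [Finset.mem_Icc]
        constructor
        · exact h1
        · calc (Iset F1 p.1).card = (Iset F1 p.1).card * 1 := by ring
            _ ≤ (Iset F1 p.1).card * (Jset F1 p).card := Nat.mul_le_mul_left _ h2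
            _ ≤ α := h3
      · rw [Finset.mem_Icc]
        refine ⟨h2, ?_⟩
        rw [Nat.le_div_iff_mul_le h1]
        calc (Jset F1 p).card * (Iset F1 p.1).card
            = (Iset F1 p.1).card * (Jset F1 p).card := by ring
          _ ≤ α := h3
    · intro p hp q hq heq
      have h1 := congrArg Sigma.fst heq
      have h2 := congrArg Sigma.snd heq
      exact rank_inj hU hp hq h1 h2
  calc F1.card ≤ target.card := hmain
    _ = ∑ i ∈ Finset.Icc 1 α, α / i := by
      rw [htarget, Finset.card_sigma]
      apply Finset.sum_congr rfl
      intro i _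
      rw [Nat.card_Icc]
      exact Nat.add_sub_cancel _ _
end

section
/- Let F1 and F2 be finite subsets of ℤ² such that F1 is uniquely determined by its row and column sums, |F1| = |F2|, F1 ∩ F2 = ∅, and the error in the line sums equals 2α for a positive integer α. Then |F1| ≤ α(1 + log α), where log denotes the natural logarithm. -/
open Finset

lemma rowSum_eq_sum (F : Finset (ℤ×ℤ)) (i : ℤ) :
    rowSum F i = ∑ p ∈ F, if p.1 = i then 1 else 0 := by
  rw [rowSum, Finset.card_filter]

lemma colSum_eq_sum (F : Finset (ℤ×ℤ)) (j : ℤ) :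
    colSum F j = ∑ p ∈ F, if p.2 = j then 1 else 0 := by
  rw [colSum, Finset.card_filter]

lemma no_switch {F1 : Finset (ℤ×ℤ)} (hU : UniquelyDetermined F1)
    {i j i' j' : ℤ} (h1 : (i,j) ∈ F1) (h2 : (i',j') ∈ F1) :
    (i,j') ∈ F1 ∨ (i',j) ∈ F1 := by
  by_contra hc
  push_neg at hc
  obtain ⟨ha, hb⟩ := hc
  have hii : i ≠ i' := by rintro rfl; exact ha h2
  have hjj : j ≠ j' := by rintro rfl; exact hb h2
  have h4 : ((i' : ℤ), j') ≠ (i, j) := by simp [Prod.ext_iff]; intro h; exact absurd h.symm hii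
  have m1 : ((i' : ℤ), j') ∈ F1.erase (i,j) := Finset.mem_erase.2 ⟨h4, h2⟩
  have e2 : ((i' : ℤ), j) ∉ (F1.erase (i,j)).erase (i',j') :=
    fun h => hb (Finset.mem_of_mem_erase (Finset.mem_of_mem_erase h))
  have e1 : ((i : ℤ), j') ∉ insert ((i' : ℤ),j) ((F1.erase (i,j)).erase (i',j')) := by
    intro h
    rcases Finset.mem_insert.1 h with h|h
    · exact hii (congrArg Prod.fst h)
    · exact ha (Finset.mem_of_mem_erase (Finset.mem_of_mem_erase h))
  set G := insert ((i : ℤ),j') (insert ((i' : ℤ),j) ((F1.erase (i,j)).erase (i',j'))) with hG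
  have hrow : ∀ r, rowSum G r = rowSum F1 r := by
    intro r
    rw [rowSum_eq_sum, rowSum_eq_sum, hG, Finset.sum_insert e1, Finset.sum_insert e2]
    have A := Finset.sum_erase_add (F1.erase (i,j)) (fun p : ℤ×ℤ => if p.1 = r then 1 else 0) m1
    have B := Finset.sum_erase_add F1 (fun p : ℤ×ℤ => if p.1 = r then 1 else 0) h1
    simp only at A B ⊢
    omega
  have hcol : ∀ cc, colSum G cc = colSum F1 cc := by
    intro cc
    rw [colSum_eq_sum, colSum_eq_sum, hG, Finset.sum_insert e1, Finset.sum_insert e2]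
    have A := Finset.sum_erase_add (F1.erase (i,j)) (fun p : ℤ×ℤ => if p.2 = cc then 1 else 0) m1
    have B := Finset.sum_erase_add F1 (fun p : ℤ×ℤ => if p.2 = cc then 1 else 0) h1
    simp only at A B ⊢
    omega
  have hGF := hU G hrow hcol
  apply ha
  rw [← hGF]
  exact Finset.mem_insert_self _ _

/-- The set of columns occupied in row `i`. -/
def RSet (F : Finset (ℤ×ℤ)) (i : ℤ) : Finset ℤ := (F.filter (fun p => p.1 = i)).image Prod.snd

lemma mem_RSet {F : Finset (ℤ×ℤ)} {i j : ℤ} : j ∈ RSet F i ↔ (i,j) ∈ F := by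
  constructor
  · intro h
    obtain ⟨p, hp, hpj⟩ := Finset.mem_image.1 h
    obtain ⟨hpF, hpi⟩ := Finset.mem_filter.1 hp
    have : p = (i, j) := by
      ext
      · exact hpi
      · exact hpj
    rwa [this] at hpF
  · intro h
    exact Finset.mem_image.2 ⟨(i,j), Finset.mem_filter.2 ⟨h, rfl⟩, rfl⟩

lemma card_RSet (F : Finset (ℤ×ℤ)) (i : ℤ) : (RSet F i).card = rowSum F i := by
  rw [RSet, rowSum]
  apply Finset.card_image_of_injOn
  intro p hp q hq h
  obtain ⟨_, hpi⟩ := Finset.mem_filter.1 hp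
  obtain ⟨_, hqi⟩ := Finset.mem_filter.1 hq
  ext
  · rw [hpi, hqi]
  · exact h

lemma chain_RSet {F1 : Finset (ℤ×ℤ)} (hU : UniquelyDetermined F1) (i i' : ℤ) :
    RSet F1 i ⊆ RSet F1 i' ∨ RSet F1 i' ⊆ RSet F1 i := by
  by_contra h
  push_neg at h
  obtain ⟨h1, h2⟩ := h
  obtain ⟨j, hj, hj'⟩ := Finset.not_subset.1 h1
  obtain ⟨j2, hj2, hj2'⟩ := Finset.not_subset.1 h2
  rcases no_switch hU (mem_RSet.1 hj) (mem_RSet.1 hj2) with h|h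
  · exact hj2' (mem_RSet.2 h)
  · exact hj' (mem_RSet.2 h)

/-- If `r i ≥ r i'`, the chain goes one way. -/
lemma RSet_subset_of_le {F1 : Finset (ℤ×ℤ)} (hU : UniquelyDetermined F1) {i i' : ℤ}
    (h : rowSum F1 i ≤ rowSum F1 i') : RSet F1 i ⊆ RSet F1 i' := by
  rcases chain_RSet hU i i' with h'|h'
  · exact h'
  · have := Finset.eq_of_subset_of_card_le h' (by rw [card_RSet, card_RSet]; exact h)
    rw [this]

lemma rowSum_eq_zero {F : Finset (ℤ×ℤ)} {i : ℤ} (h : i ∉ F.image Prod.fst) : rowSum F i = 0 := by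
  rw [rowSum, Finset.card_eq_zero, Finset.filter_eq_empty_iff]
  intro p hp hpi
  exact h (Finset.mem_image.2 ⟨p, hp, hpi⟩)

lemma colSum_eq_zero {F : Finset (ℤ×ℤ)} {j : ℤ} (h : j ∉ F.image Prod.snd) : colSum F j = 0 := by
  rw [colSum, Finset.card_eq_zero, Finset.filter_eq_empty_iff]
  intro p hp hpj
  exact h (Finset.mem_image.2 ⟨p, hp, hpj⟩)

lemma sum_rowSum {F : Finset (ℤ×ℤ)} {S : Finset ℤ} (h : ∀ p ∈ F, p.1 ∈ S) :
    ∑ i ∈ S, rowSum F i = F.card := by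
  exact (Finset.card_eq_sum_card_fiberwise h).symm

lemma sum_colSum {F : Finset (ℤ×ℤ)} {T : Finset ℤ} (h : ∀ p ∈ F, p.2 ∈ T) :
    ∑ j ∈ T, colSum F j = F.card := by
  exact (Finset.card_eq_sum_card_fiberwise h).symm

lemma sum_rowSum_filter (F : Finset (ℤ×ℤ)) (I : Finset ℤ) :
    ∑ i ∈ I, rowSum F i = (F.filter (fun p => p.1 ∈ I)).card := by
  rw [Finset.card_eq_sum_card_fiberwise (f := Prod.fst) (s := F.filter (fun p => p.1 ∈ I)) (t := I)
    (fun p hp => (Finset.mem_filter.1 hp).2)]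
  apply Finset.sum_congr rfl
  intro i hi
  rw [rowSum, Finset.filter_filter]
  congr 1
  apply Finset.filter_congr
  intro p hp
  constructor
  · intro h
    exact ⟨by rwa [h], h⟩
  · exact And.right

lemma sum_colSum_filter (F : Finset (ℤ×ℤ)) (J : Finset ℤ) :
    ∑ j ∈ J, colSum F j = (F.filter (fun p => p.2 ∈ J)).card := by
  rw [Finset.card_eq_sum_card_fiberwise (f := Prod.snd) (s := F.filter (fun p => p.2 ∈ J)) (t := J)
    (fun p hp => (Finset.mem_filter.1 hp).2)]
  apply Finset.sum_congr rfl
  intro j hj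
  rw [colSum, Finset.filter_filter]
  congr 1
  apply Finset.filter_congr
  intro p hp
  constructor
  · intro h
    exact ⟨by rwa [h], h⟩
  · exact And.right

/-- abs-sum bound: for `I ⊆ S`, `∑_{S} |g| ≥ 2 ∑_I g - ∑_S g`. -/
lemma abs_sum_bound {S I : Finset ℤ} (hIS : I ⊆ S) (g : ℤ → ℤ) :
    2 * ∑ i ∈ I, g i - ∑ i ∈ S, g i ≤ ∑ i ∈ S, |g i| := by
  have h1 : ∑ i ∈ S \ I, g i + ∑ i ∈ I, g i = ∑ i ∈ S, g i := Finset.sum_sdiff hIS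
  have h2 : ∑ i ∈ S \ I, |g i| + ∑ i ∈ I, |g i| = ∑ i ∈ S, |g i| := Finset.sum_sdiff hIS
  have h3 : ∑ i ∈ I, g i ≤ ∑ i ∈ I, |g i| := Finset.sum_le_sum fun i _ => le_abs_self _
  have h4 : -∑ i ∈ S \ I, g i ≤ ∑ i ∈ S \ I, |g i| := by
    rw [← Finset.sum_neg_distrib]
    exact Finset.sum_le_sum fun i _ => neg_le_abs _
  linarith

lemma key_lemma (F1 F2 : Finset (ℤ × ℤ))
    (hcard : F1.card = F2.card) (hdisj : F1 ∩ F2 = ∅)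
    (I J : Finset ℤ)
    (hI : ∀ i ∈ I, i ∈ F1.image Prod.fst)
    (hJ : ∀ j ∈ J, j ∈ F1.image Prod.snd)
    (hrect : ∀ i ∈ I, ∀ j ∈ J, (i,j) ∈ F1)
    (hcover : ∀ p ∈ F1, p.1 ∈ I ∨ p.2 ∈ J) :
    2 * ((I.card : ℤ) * J.card) ≤ lineError F1 F2 := by
  classical
  set S := (F1 ∪ F2).image Prod.fst with hS
  set T := (F1 ∪ F2).image Prod.snd with hT
  -- convert finsums to finite sums
  have hrS : ∀ F : Finset (ℤ×ℤ), F ⊆ F1 ∪ F2 → ∀ i ∉ S, rowSum F i = 0 := by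
    intro F hF i hi
    exact rowSum_eq_zero (fun h => hi (Finset.image_subset_image hF h))
  have hcT : ∀ F : Finset (ℤ×ℤ), F ⊆ F1 ∪ F2 → ∀ j ∉ T, colSum F j = 0 := by
    intro F hF j hj
    exact colSum_eq_zero (fun h => hj (Finset.image_subset_image hF h))
  have hle : lineError F1 F2 =
      (∑ i ∈ S, |(rowSum F1 i : ℤ) - rowSum F2 i|) +
      (∑ j ∈ T, |(colSum F1 j : ℤ) - colSum F2 j|) := by
    rw [lineError]
    congr 1
    · apply finsum_eq_finset_sum_of_support_subset
      intro i hi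
      simp only [Function.mem_support] at hi
      by_contra hiS
      have hiS' : i ∉ S := fun h => hiS (Finset.mem_coe.2 h)
      apply hi
      rw [hrS F1 Finset.subset_union_left i hiS', hrS F2 Finset.subset_union_right i hiS']
      norm_num
    · apply finsum_eq_finset_sum_of_support_subset
      intro j hj
      simp only [Function.mem_support] at hj
      by_contra hjT
      have hjT' : j ∉ T := fun h => hjT (Finset.mem_coe.2 h)
      apply hj
      rw [hcT F1 Finset.subset_union_left j hjT', hcT F2 Finset.subset_union_right j hjT']
      norm_num
  -- totals
  have htotr : ∀ F : Finset (ℤ×ℤ), F ⊆ F1 ∪ F2 → ∑ i ∈ S, rowSum F i = F.card := by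
    intro F hF
    exact sum_rowSum (fun p hp => Finset.mem_image.2 ⟨p, hF hp, rfl⟩)
  have htotc : ∀ F : Finset (ℤ×ℤ), F ⊆ F1 ∪ F2 → ∑ j ∈ T, colSum F j = F.card := by
    intro F hF
    exact sum_colSum (fun p hp => Finset.mem_image.2 ⟨p, hF hp, rfl⟩)
  have hIS : I ⊆ S := fun i hi => Finset.image_subset_image Finset.subset_union_left (hI i hi)
  have hJT : J ⊆ T := fun j hj => Finset.image_subset_image Finset.subset_union_left (hJ j hj)
  -- abs bounds
  have hrow := abs_sum_bound hIS (fun i => (rowSum F1 i : ℤ) - rowSum F2 i)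
  have hcolb := abs_sum_bound hJT (fun j => (colSum F1 j : ℤ) - colSum F2 j)
  -- identify partial sums with filtered cardinalities
  have er1 : ∑ i ∈ I, ((rowSum F1 i : ℤ) - rowSum F2 i)
      = ((F1.filter (fun p => p.1 ∈ I)).card : ℤ) - (F2.filter (fun p => p.1 ∈ I)).card := by
    rw [Finset.sum_sub_distrib]
    push_cast [← sum_rowSum_filter]
    rfl
  have ec1 : ∑ j ∈ J, ((colSum F1 j : ℤ) - colSum F2 j)
      = ((F1.filter (fun p => p.2 ∈ J)).card : ℤ) - (F2.filter (fun p => p.2 ∈ J)).card := by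
    rw [Finset.sum_sub_distrib]
    push_cast [← sum_colSum_filter]
    rfl
  have eSr : ∑ i ∈ S, ((rowSum F1 i : ℤ) - rowSum F2 i) = 0 := by
    rw [Finset.sum_sub_distrib, ← Nat.cast_sum, ← Nat.cast_sum,
      htotr F1 Finset.subset_union_left, htotr F2 Finset.subset_union_right, hcard, sub_self]
  have eSc : ∑ j ∈ T, ((colSum F1 j : ℤ) - colSum F2 j) = 0 := by
    rw [Finset.sum_sub_distrib, ← Nat.cast_sum, ← Nat.cast_sum,
      htotc F1 Finset.subset_union_left, htotc F2 Finset.subset_union_right, hcard, sub_self]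
  -- the counting identities
  have count1 : (F1.filter (fun p => p.1 ∈ I)).card + (F1.filter (fun p => p.2 ∈ J)).card
      = F1.card + I.card * J.card := by
    have hor : F1.filter (fun p => p.1 ∈ I ∨ p.2 ∈ J) = F1 :=
      Finset.filter_true_of_mem hcover
    have hand : F1.filter (fun p => p.1 ∈ I ∧ p.2 ∈ J) = I ×ˢ J := by
      ext p
      simp only [Finset.mem_filter, Finset.mem_product]
      constructor
      · tauto
      · intro h
        exact ⟨hrect p.1 h.1 p.2 h.2, h⟩
    calc (F1.filter (fun p => p.1 ∈ I)).card + (F1.filter (fun p => p.2 ∈ J)).card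
        = (F1.filter (fun p => p.1 ∈ I) ∪ F1.filter (fun p => p.2 ∈ J)).card
          + (F1.filter (fun p => p.1 ∈ I) ∩ F1.filter (fun p => p.2 ∈ J)).card :=
          (Finset.card_union_add_card_inter _ _).symm
      _ = F1.card + I.card * J.card := by
          rw [← Finset.filter_or, ← Finset.filter_and, hor, hand, Finset.card_product]
  have count2 : (F2.filter (fun p => p.1 ∈ I)).card + (F2.filter (fun p => p.2 ∈ J)).card
      ≤ F2.card := by
    have hand : F2.filter (fun p => p.1 ∈ I ∧ p.2 ∈ J) = ∅ := by
      rw [Finset.filter_eq_empty_iff]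
      rintro p hp ⟨hpI, hpJ⟩
      have : p ∈ F1 := by
        have := hrect p.1 hpI p.2 hpJ
        simpa using this
      have : p ∈ F1 ∩ F2 := Finset.mem_inter.2 ⟨this, hp⟩
      rw [hdisj] at this
      exact absurd this (Finset.notMem_empty p)
    calc (F2.filter (fun p => p.1 ∈ I)).card + (F2.filter (fun p => p.2 ∈ J)).card
        = (F2.filter (fun p => p.1 ∈ I) ∪ F2.filter (fun p => p.2 ∈ J)).card
          + (F2.filter (fun p => p.1 ∈ I) ∩ F2.filter (fun p => p.2 ∈ J)).card :=
          (Finset.card_union_add_card_inter _ _).symm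
      _ = (F2.filter (fun p => p.1 ∈ I ∨ p.2 ∈ J)).card := by
          rw [← Finset.filter_or, ← Finset.filter_and, hand, Finset.card_empty, add_zero]
      _ ≤ F2.card := Finset.card_le_card (Finset.filter_subset _ _)
  -- put it together
  rw [hle]
  rw [eSr] at hrow
  rw [eSc] at hcolb
  rw [er1] at hrow
  rw [ec1] at hcolb
  have c1 : ((F1.filter (fun p => p.1 ∈ I)).card : ℤ) + (F1.filter (fun p => p.2 ∈ J)).card
      = (F1.card : ℤ) + I.card * J.card := by exact_mod_cast congrArg Nat.cast count1
  have c2 : ((F2.filter (fun p => p.1 ∈ I)).card : ℤ) + (F2.filter (fun p => p.2 ∈ J)).card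
      ≤ (F2.card : ℤ) := by exact_mod_cast count2
  have hc : (F1.card : ℤ) = F2.card := by exact_mod_cast hcard
  linarith

lemma exists_sorted_list (f : ℤ → ℕ) (s : Finset ℤ) :
    ∃ l : List ℤ, l.Nodup ∧ l.toFinset = s ∧ l.Pairwise (fun a b => f b ≤ f a) := by
  induction s using Finset.strongInduction with
  | _ s ih =>
    rcases s.eq_empty_or_nonempty with rfl|hs
    · exact ⟨[], by simp⟩
    · obtain ⟨a, ha, hmax⟩ := Finset.exists_max_image s f hs
      obtain ⟨l, hnd, htf, hp⟩ := ih (s.erase a) (Finset.erase_ssubset ha)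
      refine ⟨a :: l, ?_, ?_, ?_⟩
      · refine List.nodup_cons.2 ⟨?_, hnd⟩
        rw [← List.mem_toFinset, htf]
        exact Finset.notMem_erase a s
      · rw [List.toFinset_cons, htf, Finset.insert_erase ha]
      · refine List.Pairwise.cons ?_ hp
        intro b hb
        refine hmax b ?_
        have hb' : b ∈ s.erase a := by
          rw [← htf]
          exact List.mem_toFinset.2 hb
        exact Finset.mem_of_mem_erase hb'

lemma rowSum_pos {F1 : Finset (ℤ×ℤ)} {i : ℤ} (h : i ∈ F1.image Prod.fst) : 0 < rowSum F1 i := by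
  obtain ⟨p, hp, hpi⟩ := Finset.mem_image.1 h
  rw [rowSum, Finset.card_pos]
  exact ⟨p, Finset.mem_filter.2 ⟨hp, hpi⟩⟩

/-- The positional bound: `(k+1) * r_k ≤ α`. -/
lemma positional_bound (F1 F2 : Finset (ℤ × ℤ))
    (hU : UniquelyDetermined F1)
    (hcard : F1.card = F2.card)
    (hdisj : F1 ∩ F2 = ∅)
    (α : ℕ) (herr : lineError F1 F2 = 2 * α)
    (l : List ℤ) (hnd : l.Nodup) (htf : l.toFinset = F1.image Prod.fst)
    (hp : l.Pairwise (fun a b => rowSum F1 b ≤ rowSum F1 a))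
    (k : ℕ) (hk : k < l.length) :
    (k+1) * rowSum F1 (l.get ⟨k, hk⟩) ≤ α := by
  classical
  set ik := l.get ⟨k, hk⟩ with hik
  have hikmem : ik ∈ F1.image Prod.fst := by
    rw [← htf]
    exact List.mem_toFinset.2 (l.get_mem _)
  set I : Finset ℤ := (l.take (k+1)).toFinset with hI
  set J : Finset ℤ := RSet F1 ik with hJ
  have hpg : ∀ (a b : ℕ) (ha : a < l.length) (hb : b < l.length), a ≤ b →
      rowSum F1 (l.get ⟨b, hb⟩) ≤ rowSum F1 (l.get ⟨a, ha⟩) := by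
    intro a b ha hb hab
    rcases Nat.lt_or_ge a b with h|h
    · exact List.pairwise_iff_get.1 hp ⟨a, ha⟩ ⟨b, hb⟩ h
    · have : a = b := le_antisymm hab h
      subst this
      rfl
  have hmemtake : ∀ i ∈ I, ∃ (k' : ℕ) (hk' : k' < l.length), k' ≤ k ∧ l.get ⟨k', hk'⟩ = i := by
    intro i hi
    rw [hI, List.mem_toFinset] at hi
    obtain ⟨k', hk'lt, hget⟩ := List.mem_iff_getElem.1 hi
    have hlen : (l.take (k+1)).length = k+1 := by
      rw [List.length_take]
      omega
    have hk'k : k' ≤ k := by omega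
    have hk'l : k' < l.length := lt_of_le_of_lt hk'k hk
    refine ⟨k', hk'l, hk'k, ?_⟩
    rw [← hget]
    simp [List.getElem_take]
  have hImem : ∀ i ∈ I, i ∈ F1.image Prod.fst := by
    intro i hi
    obtain ⟨k', hk', _, hget⟩ := hmemtake i hi
    rw [← htf, ← hget]
    exact List.mem_toFinset.2 (l.get_mem _)
  have hIr : ∀ i ∈ I, rowSum F1 ik ≤ rowSum F1 i := by
    intro i hi
    obtain ⟨k', hk', hk'k, hget⟩ := hmemtake i hi
    rw [← hget]
    exact hpg k' k hk' hk hk'k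
  have hrect : ∀ i ∈ I, ∀ j ∈ J, (i, j) ∈ F1 := by
    intro i hi j hj
    have : RSet F1 ik ⊆ RSet F1 i := RSet_subset_of_le hU (hIr i hi)
    exact mem_RSet.1 (this hj)
  have hcover : ∀ p ∈ F1, p.1 ∈ I ∨ p.2 ∈ J := by
    intro p hpF
    have hp1 : p.1 ∈ l := by
      rw [← List.mem_toFinset, htf]
      exact Finset.mem_image.2 ⟨p, hpF, rfl⟩
    obtain ⟨k', hk', hget⟩ := List.mem_iff_getElem.1 hp1
    rcases Nat.lt_or_ge k' (k+1) with h|h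
    · left
      rw [hI, List.mem_toFinset, ← hget]
      have hlt : k' < (l.take (k+1)).length := by
        rw [List.length_take]
        omega
      have : (l.take (k+1))[k']'hlt = l[k'] := by simp [List.getElem_take]
      rw [← this]
      exact List.getElem_mem _
    · right
      have hle : rowSum F1 p.1 ≤ rowSum F1 ik := by
        rw [← hget]
        exact hpg k k' hk hk' (by omega)
      have hsub : RSet F1 p.1 ⊆ RSet F1 ik := RSet_subset_of_le hU hle
      apply hsub
      rw [mem_RSet]
      simpa using hpF
  have hJmem : ∀ j ∈ J, j ∈ F1.image Prod.snd := by
    intro j hj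
    have := mem_RSet.1 hj
    exact Finset.mem_image.2 ⟨(ik, j), this, rfl⟩
  have hkey := key_lemma F1 F2 hcard hdisj I J hImem hJmem hrect hcover
  rw [herr] at hkey
  have hIcard : I.card = k + 1 := by
    rw [hI, List.toFinset_card_of_nodup (hnd.sublist (List.take_sublist _ _))]
    rw [List.length_take]
    omega
  have hJcard : J.card = rowSum F1 ik := card_RSet F1 ik
  rw [hIcard, hJcard] at hkey
  have hkey' : ((k : ℤ) + 1) * (rowSum F1 ik : ℤ) ≤ (α : ℤ) := by
    push_cast at hkey
    linarith
  exact_mod_cast hkey'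

theorem disjoint_bound_log
    (F1 F2 : Finset (ℤ × ℤ))
    (hU : UniquelyDetermined F1)
    (hcard : F1.card = F2.card)
    (hdisj : F1 ∩ F2 = ∅)
    (α : ℕ) (hα : 0 < α)
    (herr : lineError F1 F2 = 2 * α) :
    (F1.card : ℝ) ≤ α * (1 + Real.log α) := by
  classical
  have hα1 : (1:ℝ) ≤ (α:ℝ) := by exact_mod_cast hα
  have hlogα : 0 ≤ Real.log α := Real.log_nonneg hα1
  rcases F1.eq_empty_or_nonempty with hemp|hne
  · rw [hemp]
    simp only [Finset.card_empty, Nat.cast_zero]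
    have : (0:ℝ) ≤ (α:ℝ) := by linarith
    nlinarith
  obtain ⟨l, hnd, htf, hp⟩ := exists_sorted_list (rowSum F1) (F1.image Prod.fst)
  set m := l.length with hm
  have hm0 : 0 < m := by
    rcases Nat.eq_zero_or_pos m with h|h
    · exfalso
      have : l = [] := List.length_eq_zero_iff.1 h
      rw [this] at htf
      obtain ⟨p, hpF⟩ := hne
      have : p.1 ∈ F1.image Prod.fst := Finset.mem_image.2 ⟨p, hpF, rfl⟩
      rw [← htf] at this
      simp at this
    · exact h
  -- cardinality as sum over Fin m
  have hmap : l.map (rowSum F1) = List.ofFn (fun i : Fin m => rowSum F1 (l.get i)) := by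
    conv_lhs => rw [← List.ofFn_get l]
    rw [List.map_ofFn]
    rfl
  have hcardsum : F1.card = ∑ i : Fin m, rowSum F1 (l.get i) := by
    have h1 : ∑ i ∈ F1.image Prod.fst, rowSum F1 i = F1.card :=
      sum_rowSum (fun p hp => Finset.mem_image.2 ⟨p, hp, rfl⟩)
    rw [← h1, ← htf, List.sum_toFinset _ hnd, hmap, List.sum_ofFn]
  -- positional bounds
  have hpos : ∀ i : Fin m, ((i : ℕ)+1) * rowSum F1 (l.get i) ≤ α := by
    intro i
    exact positional_bound F1 F2 hU hcard hdisj α herr l hnd htf hp i i.isLt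
  -- every row sum positive
  have hrpos : ∀ i : Fin m, 0 < rowSum F1 (l.get i) := by
    intro i
    apply rowSum_pos
    rw [← htf]
    exact List.mem_toFinset.2 (l.get_mem _)
  -- m ≤ α
  have hmα : m ≤ α := by
    have hlast := hpos ⟨m-1, by omega⟩
    have hrp := hrpos ⟨m-1, by omega⟩
    calc m = ((m-1)+1) * 1 := by omega
    _ ≤ ((m-1)+1) * rowSum F1 (l.get ⟨m-1, by omega⟩) := by
        apply Nat.mul_le_mul_left
        omega
    _ ≤ α := hlast
  -- real estimates
  have hterm : ∀ i : Fin m, (rowSum F1 (l.get i) : ℝ) ≤ (α:ℝ) / ((i:ℝ) + 1) := by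
    intro i
    rw [le_div_iff₀ (by positivity)]
    have h := hpos i
    have : ((i:ℕ)+1 : ℝ) * (rowSum F1 (l.get i) : ℝ) ≤ (α:ℝ) := by exact_mod_cast h
    push_cast at this ⊢
    linarith
  have hsum : (F1.card : ℝ) ≤ ∑ i : Fin m, (α:ℝ) / ((i:ℝ) + 1) := by
    rw [hcardsum]
    push_cast
    exact Finset.sum_le_sum (fun i _ => hterm i)
  have hfact : ∑ i : Fin m, (α:ℝ) / ((i:ℝ) + 1) = (α:ℝ) * ((harmonic m : ℚ) : ℝ) := by
    rw [harmonic]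
    push_cast
    rw [← Fin.sum_univ_eq_sum_range (fun i => ((i:ℝ)+1)⁻¹) m, Finset.mul_sum]
    apply Finset.sum_congr rfl
    intro i _
    rw [div_eq_mul_inv]
  have hharm : ((harmonic m : ℚ) : ℝ) ≤ 1 + Real.log m := harmonic_le_one_add_log m
  have hlog : Real.log m ≤ Real.log α := by
    apply Real.log_le_log (by exact_mod_cast hm0)
    exact_mod_cast hmα
  calc (F1.card : ℝ) ≤ (α:ℝ) * ((harmonic m : ℚ) : ℝ) := by rw [← hfact]; exact hsum
    _ ≤ (α:ℝ) * (1 + Real.log m) := by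
        apply mul_le_mul_of_nonneg_left hharm
        linarith
    _ ≤ (α:ℝ) * (1 + Real.log α) := by
        apply mul_le_mul_of_nonneg_left (by linarith)
        linarith
end

section
/- Let F1 and F2 be finite subsets of ℤ² such that F1 is uniquely determined by its row and column sums, |F1| = |F2|, and the error in the line sums equals 2α for a positive integer α. Let p = |F1 ∩ F2|. Then |F1| ≤ (α + p)(1 + log(α + p)), where log denotes the natural logarithm. -/
namespace GBLaux

open Finset

lemma rowSum_pos_iff {F : Finset (ℤ × ℤ)} {i : ℤ} :
    0 < rowSum F i ↔ i ∈ F.image Prod.fst := by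
  rw [rowSum, Finset.card_pos]
  constructor
  · rintro ⟨q, hq⟩
    rw [Finset.mem_filter] at hq
    exact Finset.mem_image.2 ⟨q, hq.1, hq.2⟩
  · rintro h
    rcases Finset.mem_image.1 h with ⟨q, hq, rfl⟩
    exact ⟨q, Finset.mem_filter.2 ⟨hq, rfl⟩⟩

lemma sum_rowSum {F : Finset (ℤ × ℤ)} {S : Finset ℤ} (h : ∀ q ∈ F, q.1 ∈ S) :
    ∑ i ∈ S, rowSum F i = F.card :=
  (Finset.card_eq_sum_card_fiberwise h).symm

lemma sum_colSum {F : Finset (ℤ × ℤ)} {S : Finset ℤ} (h : ∀ q ∈ F, q.2 ∈ S) :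
    ∑ j ∈ S, colSum F j = F.card :=
  (Finset.card_eq_sum_card_fiberwise h).symm

lemma sum_rowSum_filter (F : Finset (ℤ × ℤ)) (I : Finset ℤ) :
    ∑ i ∈ I, rowSum F i = (F.filter (fun q => q.1 ∈ I)).card := by
  rw [Finset.card_eq_sum_card_fiberwise (s := F.filter (fun q => q.1 ∈ I)) (f := Prod.fst) (t := I)
    (fun q hq => (Finset.mem_filter.1 hq).2)]
  refine Finset.sum_congr rfl fun i hi => ?_
  rw [rowSum]
  congr 1
  ext q
  simp only [Finset.mem_filter]
  constructor
  · rintro ⟨hq, hqi⟩; exact ⟨⟨hq, hqi ▸ hi⟩, hqi⟩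
  · rintro ⟨⟨hq, _⟩, hqi⟩; exact ⟨hq, hqi⟩

lemma sum_colSum_filter (F : Finset (ℤ × ℤ)) (J : Finset ℤ) :
    ∑ j ∈ J, colSum F j = (F.filter (fun q => q.2 ∈ J)).card := by
  rw [Finset.card_eq_sum_card_fiberwise (s := F.filter (fun q => q.2 ∈ J)) (f := Prod.snd) (t := J)
    (fun q hq => (Finset.mem_filter.1 hq).2)]
  refine Finset.sum_congr rfl fun j hj => ?_
  rw [colSum]
  congr 1
  ext q
  simp only [Finset.mem_filter]
  constructor
  · rintro ⟨hq, hqj⟩; exact ⟨⟨hq, hqj ▸ hj⟩, hqj⟩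
  · rintro ⟨⟨hq, _⟩, hqj⟩; exact ⟨hq, hqj⟩

lemma filter_card_swap {s : Finset (ℤ × ℤ)} {u v u' v' : ℤ × ℤ}
    (hu : u ∈ s) (hv : v ∈ s) (hu' : u' ∉ s) (hv' : v' ∉ s)
    (hne : u' ≠ v') (huv : v ≠ u)
    (p : ℤ × ℤ → Prop) [DecidablePred p] (h1 : p u' ↔ p u) (h2 : p v' ↔ p v) :
    ((insert u' (insert v' ((s.erase u).erase v))).filter p).card = (s.filter p).card := by
  classical
  rw [filter_insert, filter_insert, filter_erase, filter_erase]
  set c := s.filter p with hc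
  have hsub : (c.erase u).erase v ⊆ s := by
    intro q hq
    exact (mem_filter.1 (mem_of_mem_erase (mem_of_mem_erase hq))).1
  by_cases pu : p u <;> by_cases pv : p v
  · rw [if_pos (h1.2 pu), if_pos (h2.2 pv)]
    have hvc : v ∈ c.erase u := mem_erase.2 ⟨huv, mem_filter.2 ⟨hv, pv⟩⟩
    have huc : u ∈ c := mem_filter.2 ⟨hu, pu⟩
    rw [card_insert_of_notMem (by
        simp only [mem_insert]
        rintro (h | h)
        · exact hne h
        · exact hu' (hsub h)),
      card_insert_of_notMem (fun h => hv' (hsub h)),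
      card_erase_of_mem hvc, card_erase_of_mem huc]
    have h0 : 0 < (c.erase u).card := card_pos.2 ⟨v, hvc⟩
    have e1 : (c.erase u).card = c.card - 1 := card_erase_of_mem huc
    omega
  · rw [if_pos (h1.2 pu), if_neg (fun h => pv (h2.1 h))]
    have hvnc : v ∉ c.erase u := fun h => pv (mem_filter.1 (mem_of_mem_erase h)).2
    rw [erase_eq_of_notMem hvnc]
    have huc : u ∈ c := mem_filter.2 ⟨hu, pu⟩
    rw [card_insert_of_notMem (fun h => hu' (mem_filter.1 (mem_of_mem_erase h)).1),
      card_erase_of_mem huc]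
    have h0 : 0 < c.card := card_pos.2 ⟨u, huc⟩
    omega
  · rw [if_neg (fun h => pu (h1.1 h)), if_pos (h2.2 pv)]
    have hunc : u ∉ c := fun h => pu (mem_filter.1 h).2
    rw [erase_eq_of_notMem hunc]
    have hvc : v ∈ c := mem_filter.2 ⟨hv, pv⟩
    rw [card_insert_of_notMem (fun h => hv' (mem_filter.1 (mem_of_mem_erase h)).1),
      card_erase_of_mem hvc]
    have h0 : 0 < c.card := card_pos.2 ⟨v, hvc⟩
    omega
  · rw [if_neg (fun h => pu (h1.1 h)), if_neg (fun h => pv (h2.1 h))]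
    have hvnc : v ∉ c.erase u := fun h => pv (mem_filter.1 (mem_of_mem_erase h)).2
    have hunc : u ∉ c := fun h => pu (mem_filter.1 h).2
    rw [erase_eq_of_notMem hvnc, erase_eq_of_notMem hunc]

/-- A uniquely determined set has no switching component. -/
lemma swap_free {F1 : Finset (ℤ × ℤ)} (hU : UniquelyDetermined F1) {i i' j j' : ℤ}
    (h1 : (i, j) ∈ F1) (h2 : (i', j') ∈ F1) (h3 : (i, j') ∉ F1) : (i', j) ∈ F1 := by
  by_contra h4
  have hii : i ≠ i' := by rintro rfl; exact h3 h2
  have hjj : j ≠ j' := by rintro rfl; exact h4 h2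
  set G : Finset (ℤ × ℤ) :=
    insert (i, j') (insert (i', j) ((F1.erase (i, j)).erase (i', j'))) with hG
  have hne : (i, j') ≠ (i', j) := fun h => hii (congrArg Prod.fst h)
  have huv : (i', j') ≠ (i, j) := fun h => hii (congrArg Prod.fst h).symm
  have hrow : ∀ x, rowSum G x = rowSum F1 x := fun x =>
    filter_card_swap h1 h2 h3 h4 hne huv _ Iff.rfl Iff.rfl
  have hcol : ∀ x, colSum G x = colSum F1 x := by
    intro x
    have hG' : G =
        insert (i, j') (insert (i', j) ((F1.erase (i', j')).erase (i, j))) := by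
      rw [hG, erase_right_comm]
    rw [colSum, colSum, hG']
    exact filter_card_swap h2 h1 h3 h4 hne (Ne.symm huv) _ Iff.rfl Iff.rfl
  have hGF : G = F1 := hU G hrow hcol
  apply h3
  rw [← hGF, hG]
  exact mem_insert_self _ _

/-- Rows of a uniquely determined set are nested. -/
lemma row_mono {F1 : Finset (ℤ × ℤ)} (hU : UniquelyDetermined F1) {i i' : ℤ}
    (h : rowSum F1 i ≤ rowSum F1 i') {j : ℤ} (hj : (i, j) ∈ F1) : (i', j) ∈ F1 := by
  by_contra hj'
  set R : ℤ → Finset ℤ := fun x => (F1.filter (fun q => q.1 = x)).image Prod.snd with hR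
  have hmem : ∀ x y, y ∈ R x ↔ (x, y) ∈ F1 := by
    intro x y
    simp only [hR, mem_image, mem_filter]
    constructor
    · rintro ⟨q, ⟨hq, hq1⟩, hq2⟩
      have : q = (x, y) := Prod.ext hq1 hq2
      rwa [this] at hq
    · intro hxy; exact ⟨(x, y), ⟨hxy, rfl⟩, rfl⟩
  have hsub : R i' ⊆ R i := by
    intro y hy
    have hy' := (hmem i' y).1 hy
    rw [hmem]
    by_contra h5
    exact hj' (swap_free hU hj hy' h5)
  have hne : R i' ≠ R i := by
    intro he
    exact hj' ((hmem i' j).1 (he ▸ ((hmem i j).2 hj)))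
  have hcard := card_lt_card (HasSubset.Subset.ssubset_of_ne hsub hne)
  have hcR : ∀ x, (R x).card = rowSum F1 x := by
    intro x
    rw [hR, rowSum]
    apply card_image_of_injOn
    intro q hq q' hq' hqq
    exact Prod.ext ((mem_filter.1 hq).2.trans (mem_filter.1 hq').2.symm) hqq
  rw [hcR, hcR] at hcard
  omega

/-- The key counting lemma: if a row of `F1` has row sum `r` and `k` rows have
row sum at least `r`, then `k * r ≤ α + p`. -/
lemma key_lemma (F1 F2 : Finset (ℤ × ℤ)) (hU : UniquelyDetermined F1)
    (hcard : F1.card = F2.card) (α : ℕ) (herr : lineError F1 F2 = 2 * α)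
    (p : ℕ) (hp : p = (F1 ∩ F2).card) (i0 : ℤ) (h0 : 0 < rowSum F1 i0) :
    ((F1.image Prod.fst).filter (fun i => rowSum F1 i0 ≤ rowSum F1 i)).card
      * rowSum F1 i0 ≤ α + p := by
  classical
  set S : Finset ℤ := (F1 ∪ F2).image Prod.fst with hS
  set S' : Finset ℤ := (F1 ∪ F2).image Prod.snd with hS'
  set I : Finset ℤ := S.filter (fun i => rowSum F1 i0 ≤ rowSum F1 i) with hI
  set J : Finset ℤ := (F1.filter (fun q => q.1 = i0)).image Prod.snd with hJ
  have hF1S : ∀ q ∈ F1, q.1 ∈ S := fun q hq =>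
    mem_image_of_mem _ (mem_union_left _ hq)
  have hF2S : ∀ q ∈ F2, q.1 ∈ S := fun q hq =>
    mem_image_of_mem _ (mem_union_right _ hq)
  have hF1S' : ∀ q ∈ F1, q.2 ∈ S' := fun q hq =>
    mem_image_of_mem _ (mem_union_left _ hq)
  have hF2S' : ∀ q ∈ F2, q.2 ∈ S' := fun q hq =>
    mem_image_of_mem _ (mem_union_right _ hq)
  have hIeq : (F1.image Prod.fst).filter (fun i => rowSum F1 i0 ≤ rowSum F1 i) = I := by
    ext i
    simp only [hI, mem_filter, and_congr_left_iff]
    intro hle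
    constructor
    · intro hi
      rcases mem_image.1 hi with ⟨q, hq, rfl⟩
      exact hF1S q hq
    · intro _
      exact rowSum_pos_iff.1 (lt_of_lt_of_le h0 hle)
  rw [hIeq]
  have hJcard : J.card = rowSum F1 i0 := by
    rw [hJ, rowSum]
    apply card_image_of_injOn
    intro q hq q' hq' hqq
    exact Prod.ext ((mem_filter.1 hq).2.trans (mem_filter.1 hq').2.symm) hqq
  have hmemJ : ∀ y, y ∈ J ↔ (i0, y) ∈ F1 := by
    intro y
    simp only [hJ, mem_image, mem_filter]
    constructor
    · rintro ⟨q, ⟨hq, hq1⟩, hq2⟩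
      have : q = (i0, y) := Prod.ext hq1 hq2
      rwa [this] at hq
    · intro hxy; exact ⟨(i0, y), ⟨hxy, rfl⟩, rfl⟩
  have hIJ : ∀ x ∈ I, ∀ y ∈ J, (x, y) ∈ F1 := by
    intro x hx y hy
    exact row_mono hU (mem_filter.1 hx).2 ((hmemJ y).1 hy)
  have hcover : ∀ q ∈ F1, q.1 ∈ I ∨ q.2 ∈ J := by
    intro q hq
    by_cases hle : rowSum F1 i0 ≤ rowSum F1 q.1
    · exact Or.inl (mem_filter.2 ⟨hF1S q hq, hle⟩)
    · right
      rw [hmemJ]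
      exact row_mono hU (le_of_not_ge hle) (show (q.1, q.2) ∈ F1 by rwa [Prod.mk.eta])
  have hid : ∀ F : Finset (ℤ × ℤ),
      (F.filter (fun q => q.1 ∈ I)).card + (F.filter (fun q => q.2 ∈ J)).card
        = (F.filter (fun q => q.1 ∈ I ∨ q.2 ∈ J)).card
          + (F.filter (fun q => q.1 ∈ I ∧ q.2 ∈ J)).card := by
    intro F
    rw [filter_or, filter_and]
    exact (card_union_add_card_inter _ _).symm
  have hprod : F1.filter (fun q => q.1 ∈ I ∧ q.2 ∈ J) = I ×ˢ J := by
    ext q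
    simp only [mem_filter, mem_product]
    constructor
    · exact fun h => h.2
    · intro h
      refine ⟨?_, h⟩
      have := hIJ q.1 h.1 q.2 h.2
      rwa [Prod.mk.eta] at this
  have hcount1 : ∑ i ∈ I, rowSum F1 i + ∑ j ∈ J, colSum F1 j
      = F1.card + I.card * rowSum F1 i0 := by
    rw [sum_rowSum_filter, sum_colSum_filter, hid F1, filter_true_of_mem hcover,
      hprod, card_product, hJcard]
  have hcount2 : ∑ i ∈ I, rowSum F2 i + ∑ j ∈ J, colSum F2 j ≤ F2.card + p := by
    rw [sum_rowSum_filter, sum_colSum_filter, hid F2]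
    have a1 : (F2.filter (fun q => q.1 ∈ I ∨ q.2 ∈ J)).card ≤ F2.card :=
      card_filter_le _ _
    have a2 : (F2.filter (fun q => q.1 ∈ I ∧ q.2 ∈ J)).card ≤ p := by
      rw [hp]
      apply card_le_card
      intro q hq
      obtain ⟨hq2, hx, hy⟩ := mem_filter.1 hq
      rw [mem_inter]
      have := hIJ q.1 hx q.2 hy
      rw [Prod.mk.eta] at this
      exact ⟨this, hq2⟩
    omega
  set a : ℤ → ℤ := fun i => (rowSum F1 i : ℤ) - (rowSum F2 i : ℤ) with ha
  set b : ℤ → ℤ := fun j => (colSum F1 j : ℤ) - (colSum F2 j : ℤ) with hb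
  have hsupA : ∀ i, i ∉ S → |a i| = 0 := by
    intro i hi
    have z1 : rowSum F1 i = 0 := by
      by_contra hz
      rcases mem_image.1 (rowSum_pos_iff.1 (Nat.pos_of_ne_zero hz)) with ⟨q, hq, hq1⟩
      exact hi (hq1 ▸ hF1S q hq)
    have z2 : rowSum F2 i = 0 := by
      by_contra hz
      rcases mem_image.1 (rowSum_pos_iff.1 (Nat.pos_of_ne_zero hz)) with ⟨q, hq, hq1⟩
      exact hi (hq1 ▸ hF2S q hq)
    simp [ha, z1, z2]
  have hsupB : ∀ j, j ∉ S' → |b j| = 0 := by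
    intro j hj
    have z1 : colSum F1 j = 0 := by
      by_contra hz
      rw [colSum, ← Ne, ← Nat.pos_iff_ne_zero, card_pos] at hz
      rcases hz with ⟨q, hq⟩
      rcases mem_filter.1 hq with ⟨hq1, hq2⟩
      exact hj (hq2 ▸ hF1S' q hq1)
    have z2 : colSum F2 j = 0 := by
      by_contra hz
      rw [colSum, ← Ne, ← Nat.pos_iff_ne_zero, card_pos] at hz
      rcases hz with ⟨q, hq⟩
      rcases mem_filter.1 hq with ⟨hq1, hq2⟩
      exact hj (hq2 ▸ hF2S' q hq1)
    simp [hb, z1, z2]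
  have herr' : ∑ i ∈ S, |a i| + ∑ j ∈ S', |b j| = 2 * (α : ℤ) := by
    rw [← herr, lineError]
    congr 1
    · exact (finsum_eq_sum_of_support_subset _ (fun i hi => by
        by_contra hiS
        exact hi (hsupA i hiS))).symm
    · exact (finsum_eq_sum_of_support_subset _ (fun j hj => by
        by_contra hjS
        exact hj (hsupB j hjS))).symm
  have ha0 : ∑ i ∈ S, a i = 0 := by
    simp only [ha]
    rw [Finset.sum_sub_distrib, ← Nat.cast_sum, ← Nat.cast_sum,
      sum_rowSum hF1S, sum_rowSum hF2S, hcard, sub_self]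
  have hb0 : ∑ j ∈ S', b j = 0 := by
    simp only [hb]
    rw [Finset.sum_sub_distrib, ← Nat.cast_sum, ← Nat.cast_sum,
      sum_colSum hF1S', sum_colSum hF2S', hcard, sub_self]
  have habs : ∀ (T U : Finset ℤ) (f : ℤ → ℤ), T ⊆ U → ∑ i ∈ U, f i = 0 →
      2 * (∑ i ∈ T, f i) ≤ ∑ i ∈ U, |f i| := by
    intro T U f hTU hzero
    have h1 : ∑ i ∈ T, f i ≤ ∑ i ∈ T, |f i| := sum_le_sum (fun i _ => le_abs_self _)
    have h2 : ∑ i ∈ U \ T, f i + ∑ i ∈ T, f i = 0 := by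
      rw [sum_sdiff hTU]; exact hzero
    have h4 : - ∑ i ∈ U \ T, f i ≤ ∑ i ∈ U \ T, |f i| := by
      rw [← Finset.sum_neg_distrib]
      exact sum_le_sum (fun i _ => neg_le_abs _)
    have h5 : ∑ i ∈ U \ T, |f i| + ∑ i ∈ T, |f i| = ∑ i ∈ U, |f i| := sum_sdiff hTU
    linarith
  have hIS : I ⊆ S := filter_subset _ _
  have hJS' : J ⊆ S' := by
    intro y hy
    exact hF1S' _ ((hmemJ y).1 hy)
  have hXa := habs I S a hIS ha0
  have hYb := habs J S' b hJS' hb0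
  have habssum : ∑ i ∈ S, |a i| + ∑ j ∈ S', |b j| = 2 * (α : ℤ) := herr'
  have eA : ∑ i ∈ I, a i
      = (∑ i ∈ I, rowSum F1 i : ℕ) - ((∑ i ∈ I, rowSum F2 i : ℕ) : ℤ) := by
    simp only [ha]
    rw [Finset.sum_sub_distrib, Nat.cast_sum, Nat.cast_sum]
  have eB : ∑ j ∈ J, b j
      = (∑ j ∈ J, colSum F1 j : ℕ) - ((∑ j ∈ J, colSum F2 j : ℕ) : ℤ) := by
    simp only [hb]
    rw [Finset.sum_sub_distrib, Nat.cast_sum, Nat.cast_sum]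
  -- assemble over ℤ
  have goalZ : (I.card : ℤ) * (rowSum F1 i0 : ℤ) ≤ (α : ℤ) + (p : ℤ) := by
    have c1 : ((∑ i ∈ I, rowSum F1 i : ℕ) : ℤ) + ((∑ j ∈ J, colSum F1 j : ℕ) : ℤ)
        = (F1.card : ℤ) + (I.card : ℤ) * (rowSum F1 i0 : ℤ) := by
      exact_mod_cast congrArg (Nat.cast : ℕ → ℤ) hcount1
    have c2 : ((∑ i ∈ I, rowSum F2 i : ℕ) : ℤ) + ((∑ j ∈ J, colSum F2 j : ℕ) : ℤ)
        ≤ (F2.card : ℤ) + (p : ℤ) := by exact_mod_cast hcount2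
    have c3 : (F1.card : ℤ) = (F2.card : ℤ) := by exact_mod_cast hcard
    linarith [hXa, hYb, habssum, eA, eB, c1, c2, c3,
      Finset.sum_sub_distrib (s := I) (f := fun i => (rowSum F1 i : ℤ))
        (g := fun i => (rowSum F2 i : ℤ))]
  exact_mod_cast goalZ

end GBLaux

theorem general_bound_log
    (F1 F2 : Finset (ℤ × ℤ))
    (hU : UniquelyDetermined F1)
    (hcard : F1.card = F2.card)
    (α : ℕ) (hα : 0 < α)
    (herr : lineError F1 F2 = 2 * α)
    (p : ℕ) (hp : p = (F1 ∩ F2).card) :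
    (F1.card : ℝ) ≤ (α + p) * (1 + Real.log (α + p)) := by
  classical
  open Finset GBLaux in
  by_cases hF1 : F1 = ∅
  · rw [hF1]
    simp only [Finset.card_empty, Nat.cast_zero]
    have h1 : (1 : ℝ) ≤ (α : ℝ) + p := by
      have hα' : (1 : ℝ) ≤ (α : ℝ) := by exact_mod_cast hα
      have hp' : (0 : ℝ) ≤ (p : ℝ) := Nat.cast_nonneg p
      linarith
    have h2 : 0 ≤ Real.log ((α : ℝ) + p) := Real.log_nonneg h1
    have h3 : (0 : ℝ) ≤ (α : ℝ) + p := by linarith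
    nlinarith
  · set rows : Finset ℤ := F1.image Prod.fst with hrows
    have hne : rows.Nonempty := by
      obtain ⟨q, hq⟩ := Finset.nonempty_iff_ne_empty.2 hF1
      exact ⟨q.1, Finset.mem_image_of_mem _ hq⟩
    set T : ℕ := rows.card with hT
    set m : ℕ := α + p with hm
    have hkey : ∀ i ∈ rows,
        (rows.filter (fun i' => rowSum F1 i ≤ rowSum F1 i')).card * rowSum F1 i ≤ m :=
      fun i hi => key_lemma F1 F2 hU hcard α herr p hp i (rowSum_pos_iff.2 hi)
    obtain ⟨imin, himin, hmin⟩ := Finset.exists_min_image rows (rowSum F1) hne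
    have hTm : T ≤ m := by
      have h1 : rows.filter (fun i' => rowSum F1 imin ≤ rowSum F1 i') = rows :=
        Finset.filter_true_of_mem (fun i hi => hmin i hi)
      have h2 := hkey imin himin
      rw [h1] at h2
      have h3 : 0 < rowSum F1 imin := rowSum_pos_iff.2 himin
      calc T = T * 1 := (mul_one T).symm
        _ ≤ T * rowSum F1 imin := Nat.mul_le_mul_left T h3
        _ ≤ m := h2
    have hT1 : 1 ≤ T := Finset.card_pos.2 hne
    set ν : ℤ → ℕ := fun i => (rows.filter (fun i' =>
      rowSum F1 i < rowSum F1 i' ∨ (rowSum F1 i' = rowSum F1 i ∧ i' ≤ i))).card with hν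
    have hν1 : ∀ i ∈ rows, 1 ≤ ν i := fun i hi =>
      Finset.card_pos.2 ⟨i, Finset.mem_filter.2 ⟨hi, Or.inr ⟨rfl, le_refl i⟩⟩⟩
    have hνT : ∀ i, ν i ≤ T := fun i => Finset.card_le_card (Finset.filter_subset _ _)
    have hνk : ∀ i ∈ rows, ν i * rowSum F1 i ≤ m := by
      intro i hi
      refine le_trans (Nat.mul_le_mul_right _ (Finset.card_le_card ?_)) (hkey i hi)
      intro i' hi'
      obtain ⟨h1, h2⟩ := Finset.mem_filter.1 hi'
      refine Finset.mem_filter.2 ⟨h1, ?_⟩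
      rcases h2 with h | h
      · exact le_of_lt h
      · exact le_of_eq h.1.symm
    have hmono : ∀ x ∈ rows, ∀ y ∈ rows,
        (rowSum F1 y < rowSum F1 x ∨ (rowSum F1 x = rowSum F1 y ∧ x < y)) → ν x < ν y := by
      intro x hx y hy hxy
      apply Finset.card_lt_card
      have hsub : rows.filter (fun i' =>
            rowSum F1 x < rowSum F1 i' ∨ (rowSum F1 i' = rowSum F1 x ∧ i' ≤ x))
          ⊆ rows.filter (fun i' =>
            rowSum F1 y < rowSum F1 i' ∨ (rowSum F1 i' = rowSum F1 y ∧ i' ≤ y)) := by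
        intro z hz
        obtain ⟨hz1, hz2⟩ := Finset.mem_filter.1 hz
        refine Finset.mem_filter.2 ⟨hz1, ?_⟩
        rcases hxy with hc | ⟨he, hlt⟩
        · left
          rcases hz2 with h | h
          · exact lt_trans hc h
          · exact h.1 ▸ hc
        · rcases hz2 with h | h
          · left; rw [← he]; exact h
          · right; exact ⟨h.1.trans he, le_trans h.2 (le_of_lt hlt)⟩
      rw [Finset.ssubset_iff_of_subset hsub]
      refine ⟨y, Finset.mem_filter.2 ⟨hy, Or.inr ⟨rfl, le_refl _⟩⟩, ?_⟩
      intro hmem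
      obtain ⟨-, hc⟩ := Finset.mem_filter.1 hmem
      rcases hxy with h1 | ⟨h1, h2⟩
      · rcases hc with h | h
        · exact absurd h (not_lt.2 (le_of_lt h1))
        · rw [h.1] at h1; exact lt_irrefl _ h1
      · rcases hc with h | h
        · rw [h1] at h; exact lt_irrefl _ h
        · exact absurd h.2 (not_le.2 h2)
    have hinj : ∀ x ∈ rows, ∀ y ∈ rows, ν x = ν y → x = y := by
      intro x hx y hy he
      by_contra hne'
      rcases lt_trichotomy (rowSum F1 x) (rowSum F1 y) with h | h | h
      · exact absurd he (ne_of_gt (hmono y hy x hx (Or.inl h)))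
      · rcases lt_trichotomy x y with h2 | h2 | h2
        · exact absurd he (ne_of_lt (hmono x hx y hy (Or.inr ⟨h, h2⟩)))
        · exact hne' h2
        · exact absurd he (ne_of_gt (hmono y hy x hx (Or.inr ⟨h.symm, h2⟩)))
      · exact absurd he (ne_of_lt (hmono x hx y hy (Or.inl h)))
    have hsum : F1.card = ∑ i ∈ rows, rowSum F1 i :=
      Finset.card_eq_sum_card_fiberwise (fun q hq => Finset.mem_image_of_mem _ hq)
    have step1 : (F1.card : ℝ) = ∑ i ∈ rows, (rowSum F1 i : ℝ) := by
      rw [hsum]; push_cast; rfl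
    have step2 : ∑ i ∈ rows, (rowSum F1 i : ℝ) ≤ ∑ i ∈ rows, (m : ℝ) / (ν i) := by
      apply Finset.sum_le_sum
      intro i hi
      rw [le_div_iff₀ (by exact_mod_cast hν1 i hi : (0 : ℝ) < (ν i : ℝ))]
      calc (rowSum F1 i : ℝ) * (ν i : ℝ) = ((ν i * rowSum F1 i : ℕ) : ℝ) := by
            push_cast; ring
        _ ≤ (m : ℝ) := by exact_mod_cast hνk i hi
    have step3 : ∑ i ∈ rows, (m : ℝ) / (ν i) = ∑ k ∈ rows.image ν, (m : ℝ) / k :=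
      (Finset.sum_image (f := fun k : ℕ => (m : ℝ) / (k : ℝ)) (g := ν) hinj).symm
    have step4 : ∑ k ∈ rows.image ν, (m : ℝ) / k ≤ ∑ k ∈ Finset.Icc 1 T, (m : ℝ) / k := by
      apply Finset.sum_le_sum_of_subset_of_nonneg
      · intro k hk
        obtain ⟨i, hi, rfl⟩ := Finset.mem_image.1 hk
        exact Finset.mem_Icc.2 ⟨hν1 i hi, hνT i⟩
      · intro k _ _
        positivity
    have step5 : ∑ k ∈ Finset.Icc 1 T, (m : ℝ) / k = m * ((harmonic T : ℚ) : ℝ) := by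
      rw [harmonic_eq_sum_Icc]
      push_cast
      rw [Finset.mul_sum]
      exact Finset.sum_congr rfl fun k _ => div_eq_mul_inv _ _
    have step6 : ((harmonic T : ℚ) : ℝ) ≤ 1 + Real.log T := harmonic_le_one_add_log T
    have step7 : Real.log T ≤ Real.log m :=
      Real.log_le_log (by exact_mod_cast hT1) (by exact_mod_cast hTm)
    have hm0 : (0 : ℝ) ≤ (m : ℝ) := Nat.cast_nonneg m
    have final : (F1.card : ℝ) ≤ (m : ℝ) * (1 + Real.log m) := by
      have c1 : (F1.card : ℝ) ≤ (m : ℝ) * ((harmonic T : ℚ) : ℝ) := by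
        rw [step1, ← step5]
        exact le_trans step2 (le_trans (le_of_eq step3) step4)
      have c2 : (m : ℝ) * ((harmonic T : ℚ) : ℝ) ≤ (m : ℝ) * (1 + Real.log m) := by
        apply mul_le_mul_of_nonneg_left _ hm0
        linarith [step6, step7]
      linarith
    have hmr : (m : ℝ) = (α : ℝ) + p := by rw [hm]; push_cast; ring
    rw [hmr] at final
    exact final
end
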